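/- arXiv:1209.5495 — 6 statements merged into one kernel-verified Lean document; each statement's English description precedes it below -/
import Mathlib

section
/- Let n >= 1 and let A be a balanced subset of A_{2n}. Then for every unit vector a in R^{2n}, every 1 <= p <= 2n satisfies (#A/(2n-1)) * <a, e_p>^2 + sum_{U in A} <U(a), e_p>^2 = #A/(2n-1), and for all distinct p, q, (#A/(2n-1)) * <a, e_p><a, e_q> + sum_{U in A} <U(a), e_p><U(a), e_q> = 0. Consequently, the set {sqrt(#A/(2n-1)) * a} together with {U(a) : U in A} is a tight frame for R^{2n} with frame constant #A/(2n-1). -/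
open Finset RealInnerProductSpace

/-- The admissibility condition defining the set `A_{2n}`. -/
def Adm (n : ℕ) (U : (Fin (2*n) → ℤˣ) × (Fin (2*n) → Fin (2*n))) : Prop :=
  (∀ i, U.1 i = - U.1 (U.2 i)) ∧ (∀ i, U.2 (U.2 i) = i)

/-- A subset `A ⊆ A_{2n}` is balanced. -/
def IsBalanced (n : ℕ) (A : Finset ((Fin (2*n) → ℤˣ) × (Fin (2*n) → Fin (2*n)))) : Prop :=
  (∀ p q : Fin (2*n), p ≠ q →
    ((A.filter (fun U => U.2 p = q)).card : ℝ) = A.card / (2*(n:ℝ) - 1)) ∧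
  (∀ p q r s : Fin (2*n), p ≠ q → p ≠ r → p ≠ s → q ≠ r → q ≠ s → r ≠ s →
    (A.filter (fun U => U.1 p * U.1 q = -1 ∧
        (U.2 r = p ∧ U.2 s = q ∨ U.2 r = q ∧ U.2 s = p))).card =
    (A.filter (fun U => U.1 p * U.1 q = 1 ∧
        (U.2 r = p ∧ U.2 s = q ∨ U.2 r = q ∧ U.2 s = p))).card)

/-- The operator `U_{(ε,k)} : ℝ^{2n} → ℝ^{2n}`, `a ↦ (ε_{k_i} a_{k_i})_i`. -/
def Uact (n : ℕ) (U : (Fin (2*n) → ℤˣ) × (Fin (2*n) → Fin (2*n)))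
    (a : EuclideanSpace ℝ (Fin (2*n))) : EuclideanSpace ℝ (Fin (2*n)) :=
  WithLp.toLp 2 (fun i => ((U.1 (U.2 i) : ℤ) : ℝ) * a (U.2 i))

theorem balanced_gives_tight_frame (n : ℕ) (hn : 1 ≤ n)
    (A : Finset ((Fin (2*n) → ℤˣ) × (Fin (2*n) → Fin (2*n))))
    (hA : ∀ U ∈ A, Adm n U) (hA0 : A.Nonempty) (hbal : IsBalanced n A)
    (a : EuclideanSpace ℝ (Fin (2*n))) (ha : ‖a‖ = 1) :
    (∀ p : Fin (2*n),
      ((A.card : ℝ) / (2*(n:ℝ) - 1)) * ⟪a, EuclideanSpace.single p (1:ℝ)⟫^2 +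
        ∑ U ∈ A, ⟪Uact n U a, EuclideanSpace.single p (1:ℝ)⟫^2 =
      (A.card : ℝ) / (2*(n:ℝ) - 1)) ∧
    (∀ p q : Fin (2*n), p ≠ q →
      ((A.card : ℝ) / (2*(n:ℝ) - 1)) * (⟪a, EuclideanSpace.single p (1:ℝ)⟫ *
          ⟪a, EuclideanSpace.single q (1:ℝ)⟫) +
        ∑ U ∈ A, ⟪Uact n U a, EuclideanSpace.single p (1:ℝ)⟫ *
          ⟪Uact n U a, EuclideanSpace.single q (1:ℝ)⟫ = 0) ∧
    (∀ x : EuclideanSpace ℝ (Fin (2*n)),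
      x = ((A.card : ℝ) / (2*(n:ℝ) - 1))⁻¹ •
        (⟪Real.sqrt ((A.card : ℝ) / (2*(n:ℝ) - 1)) • a, x⟫ •
            (Real.sqrt ((A.card : ℝ) / (2*(n:ℝ) - 1)) • a) +
          ∑ U ∈ A, ⟪Uact n U a, x⟫ • Uact n U a)) := by
  have h2n : (0:ℝ) < 2*(n:ℝ) - 1 := by
    have h1 : (1:ℝ) ≤ (n:ℝ) := by exact_mod_cast hn
    linarith
  set C : ℝ := (A.card : ℝ) / (2*(n:ℝ) - 1) with hCdef
  have hCpos : 0 < C := div_pos (by exact_mod_cast Finset.card_pos.mpr hA0) h2n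
  have hcoord : ∀ (y : EuclideanSpace ℝ (Fin (2*n))) (p : Fin (2*n)),
      ⟪y, EuclideanSpace.single p (1:ℝ)⟫ = y p := by
    intro y p; rw [EuclideanSpace.inner_single_right]; simp
  have husq : ∀ u : ℤˣ, ((u:ℤ):ℝ) * ((u:ℤ):ℝ) = 1 := by
    intro u; rcases Int.units_eq_one_or u with h|h <;> simp [h]
  have hsum : ∑ i, a i * a i = 1 := by
    have h := real_inner_self_eq_norm_sq a
    rw [ha] at h
    rw [PiLp.inner_apply] at h; simpa [pow_two] using h
  have hfpf : ∀ U ∈ A, ∀ p : Fin (2*n), U.2 p ≠ p := by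
    intro U hU p hp
    have h1 := (hA U hU).1 p
    rw [hp] at h1
    rcases Int.units_eq_one_or (U.1 p) with h2|h2 <;> rw [h2] at h1 <;>
      exact absurd h1 (by decide)
  have hinv : ∀ U ∈ A, ∀ p q : Fin (2*n), U.2 p = q → U.2 q = p := by
    intro U hU p q h
    rw [← h, (hA U hU).2]
  have hinj : ∀ U ∈ A, ∀ p q : Fin (2*n), U.2 p = U.2 q → p = q := by
    intro U hU p q h
    have := congrArg U.2 h
    rwa [(hA U hU).2, (hA U hU).2] at this
  -- the key coordinate identity
  have key : ∀ p q : Fin (2*n),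
      C * (a p * a q) + ∑ U ∈ A, (Uact n U a p * Uact n U a q)
        = if p = q then C else 0 := by
    intro p q
    by_cases hpq : p = q
    · -- diagonal case
      subst hpq
      rw [if_pos rfl]
      have h1 : ∀ U ∈ A, Uact n U a p * Uact n U a p = a (U.2 p) * a (U.2 p) := by
        intro U hU
        show (((U.1 (U.2 p) : ℤ):ℝ) * a (U.2 p)) * (((U.1 (U.2 p) : ℤ):ℝ) * a (U.2 p))
            = a (U.2 p) * a (U.2 p)
        rw [show (((U.1 (U.2 p) : ℤ):ℝ) * a (U.2 p)) * (((U.1 (U.2 p) : ℤ):ℝ) * a (U.2 p))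
            = (((U.1 (U.2 p) : ℤ):ℝ) * ((U.1 (U.2 p) : ℤ):ℝ)) * (a (U.2 p) * a (U.2 p))
          from by ring, husq, one_mul]
      have hfw := Finset.sum_fiberwise_of_maps_to (s := A) (t := univ)
        (g := fun U => U.2 p)
        (fun U _ => Finset.mem_univ _)
        (fun (U : (Fin (2*n) → ℤˣ) × (Fin (2*n) → Fin (2*n))) => a (U.2 p) * a (U.2 p))
      rw [Finset.sum_congr rfl h1, ← hfw]
      have h2 : ∀ r : Fin (2*n),
          ∑ U ∈ A.filter (fun U => U.2 p = r), a (U.2 p) * a (U.2 p)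
            = (if r = p then 0 else C) * (a r * a r) := by
        intro r
        have h3 : ∀ U ∈ A.filter (fun U => U.2 p = r),
            a (U.2 p) * a (U.2 p) = a r * a r := by
          intro U hU
          rw [(Finset.mem_filter.mp hU).2]
        rw [Finset.sum_congr rfl h3, Finset.sum_const, nsmul_eq_mul]
        congr 1
        by_cases hr : r = p
        · have hempty : A.filter (fun U => U.2 p = r) = ∅ := by
            apply Finset.filter_false_of_mem
            intro U hU h
            exact hfpf U hU p (by rw [h, hr])
          rw [hempty, if_pos hr]; simp
        · rw [if_neg hr, hbal.1 p r (fun h => hr h.symm)]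
      rw [Finset.sum_congr rfl (fun r _ => h2 r)]
      have h4 : ∑ r : Fin (2*n), (if r = p then 0 else C) * (a r * a r)
          = C - C * (a p * a p) := by
        have h5 : ∀ r : Fin (2*n), r ∈ (univ : Finset (Fin (2*n))).erase p →
            (if r = p then 0 else C) * (a r * a r) = C * (a r * a r) := by
          intro r hr
          rw [if_neg (Finset.mem_erase.mp hr).1]
        rw [← Finset.add_sum_erase _ _ (Finset.mem_univ p), if_pos rfl, zero_mul, zero_add,
          Finset.sum_congr rfl h5, ← Finset.mul_sum,
          Finset.sum_erase_eq_sub (Finset.mem_univ p), hsum]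
        ring
      rw [h4]; ring
    · -- off-diagonal case
      rw [if_neg hpq]
      have hstep : ∀ U ∈ A, Uact n U a p * Uact n U a q
          = (((U.1 p : ℤ):ℝ) * ((U.1 q : ℤ):ℝ)) * (a (U.2 p) * a (U.2 q)) := by
        intro U hU
        have e1 : U.1 (U.2 p) = - U.1 p := by rw [(hA U hU).1 p, neg_neg]
        have e2 : U.1 (U.2 q) = - U.1 q := by rw [(hA U hU).1 q, neg_neg]
        show (((U.1 (U.2 p) : ℤ):ℝ) * a (U.2 p)) * (((U.1 (U.2 q) : ℤ):ℝ) * a (U.2 q)) = _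
        rw [e1, e2]
        push_cast
        ring
      have hfw := Finset.sum_fiberwise_of_maps_to (s := A) (t := univ)
        (g := fun U => (U.2 p, U.2 q))
        (fun U _ => Finset.mem_univ _)
        (fun (U : (Fin (2*n) → ℤˣ) × (Fin (2*n) → Fin (2*n))) =>
          (((U.1 p : ℤ):ℝ) * ((U.1 q : ℤ):ℝ)) * (a (U.2 p) * a (U.2 q)))
      rw [Finset.sum_congr rfl hstep, ← hfw]
      set F : Fin (2*n) × Fin (2*n) → Finset ((Fin (2*n) → ℤˣ) × (Fin (2*n) → Fin (2*n))) :=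
        fun y => A.filter (fun U => (U.2 p, U.2 q) = y) with hF
      set h : Fin (2*n) × Fin (2*n) → ℝ := fun y =>
        ∑ U ∈ F y, (((U.1 p : ℤ):ℝ) * ((U.1 q : ℤ):ℝ)) * (a (U.2 p) * a (U.2 q)) with hh
      show C * (a p * a q) + ∑ y : Fin (2*n) × Fin (2*n), h y = 0
      -- fibers vanish unless y = (q,p) or all of p,q,y.1,y.2 distinct
      have hfib0 : ∀ y : Fin (2*n) × Fin (2*n), y ≠ (q, p) →
          (y.1 = p ∨ y.1 = q ∨ y.2 = p ∨ y.2 = q ∨ y.1 = y.2) → h y = 0 := by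
        intro y hne hcase
        have hempty : F y = ∅ := by
          apply Finset.filter_false_of_mem
          intro U hU hc
          have hc1 : U.2 p = y.1 := by rw [← hc]
          have hc2 : U.2 q = y.2 := by rw [← hc]
          rcases hcase with h|h|h|h|h
          · exact hfpf U hU p (by rw [hc1, h])
          · apply hne
            have hp2 : U.2 p = q := by rw [hc1, h]
            have hq2 : U.2 q = p := hinv U hU p q hp2
            rw [← hc, hp2, hq2]
          · apply hne
            have hq2 : U.2 q = p := by rw [hc2, h]
            have hp2 : U.2 p = q := hinv U hU q p hq2
            rw [← hc, hp2, hq2]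
          · exact hfpf U hU q (by rw [hc2, h])
          · exact hpq (hinj U hU p q (by rw [hc1, hc2, h]))
        rw [hh]
        simp only [hempty, Finset.sum_empty]
      -- the (q,p) fiber
      have hfibqp : h (q, p) = -(C * (a p * a q)) := by
        have hFeq : F (q, p) = A.filter (fun U => U.2 p = q) := by
          apply Finset.filter_congr
          intro U hU
          constructor
          · intro hc; rw [← show (U.2 p, U.2 q).1 = q from by rw [hc]]
          · intro hc
            have := hinv U hU p q hc
            rw [hc, this]
        have hval : ∀ U ∈ F (q, p),
            (((U.1 p : ℤ):ℝ) * ((U.1 q : ℤ):ℝ)) * (a (U.2 p) * a (U.2 q))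
              = -(a q * a p) := by
          intro U hU
          rw [hFeq, Finset.mem_filter] at hU
          have hp2 : U.2 p = q := hU.2
          have hq2 : U.2 q = p := hinv U hU.1 p q hp2
          have e1 : U.1 p = - U.1 q := by rw [(hA U hU.1).1 p, hp2]
          rw [hp2, hq2, e1]
          push_cast
          rw [show -((U.1 q : ℤ):ℝ) * ((U.1 q : ℤ):ℝ) * (a q * a p)
              = -((((U.1 q : ℤ):ℝ) * ((U.1 q : ℤ):ℝ)) * (a q * a p)) from by ring,
            husq, one_mul]
        rw [hh]
        simp only
        rw [Finset.sum_congr rfl hval, Finset.sum_const, hFeq, nsmul_eq_mul]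
        rw [hbal.1 p q hpq, ← hCdef]
        ring
      -- good fibers pair off to zero
      set P : Fin (2*n) × Fin (2*n) → Prop := fun y =>
        y.1 ≠ p ∧ y.1 ≠ q ∧ y.2 ≠ p ∧ y.2 ≠ q ∧ y.1 ≠ y.2 with hP
      have hhval : ∀ r s : Fin (2*n), P (r, s) →
          h (r, s) = (a r * a s) *
            (((A.filter (fun U => (U.2 p = r ∧ U.2 q = s) ∧ U.1 p * U.1 q = 1)).card : ℝ)
              - ((A.filter (fun U => (U.2 p = r ∧ U.2 q = s) ∧ U.1 p * U.1 q = -1)).card : ℝ)) := by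
        intro r s _
        have hFeq : F (r, s) = A.filter (fun U => U.2 p = r ∧ U.2 q = s) := by
          apply Finset.filter_congr
          intro U _
          constructor
          · intro hc
            exact ⟨by rw [← show (U.2 p, U.2 q).1 = r from by rw [hc]],
                   by rw [← show (U.2 p, U.2 q).2 = s from by rw [hc]]⟩
          · intro hc; rw [hc.1, hc.2]
        have hval : ∀ U ∈ F (r, s),
            (((U.1 p : ℤ):ℝ) * ((U.1 q : ℤ):ℝ)) * (a (U.2 p) * a (U.2 q))
              = (((U.1 p : ℤ):ℝ) * ((U.1 q : ℤ):ℝ)) * (a r * a s) := by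
          intro U hU
          rw [hFeq, Finset.mem_filter] at hU
          rw [hU.2.1, hU.2.2]
        rw [hh]
        simp only
        rw [Finset.sum_congr rfl hval, ← Finset.sum_mul, hFeq]
        rw [← Finset.sum_filter_add_sum_filter_not
          (A.filter (fun U => U.2 p = r ∧ U.2 q = s)) (fun U => U.1 p * U.1 q = 1)]
        have hv1 : ∀ U ∈ (A.filter (fun U => U.2 p = r ∧ U.2 q = s)).filter
            (fun U => U.1 p * U.1 q = 1),
            ((U.1 p : ℤ):ℝ) * ((U.1 q : ℤ):ℝ) = 1 := by
          intro U hU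
          have h1 := (Finset.mem_filter.mp hU).2
          have : ((U.1 p * U.1 q : ℤˣ) : ℤ) = 1 := by rw [h1]; rfl
          rw [Units.val_mul] at this
          exact_mod_cast this
        have hv2 : ∀ U ∈ (A.filter (fun U => U.2 p = r ∧ U.2 q = s)).filter
            (fun U => ¬ U.1 p * U.1 q = 1),
            ((U.1 p : ℤ):ℝ) * ((U.1 q : ℤ):ℝ) = -1 := by
          intro U hU
          have h1 := (Finset.mem_filter.mp hU).2
          rcases Int.units_eq_one_or (U.1 p * U.1 q) with h2|h2
          · exact absurd h2 h1
          · have : ((U.1 p * U.1 q : ℤˣ) : ℤ) = -1 := by rw [h2]; rfl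
            rw [Units.val_mul] at this
            exact_mod_cast this
        rw [Finset.sum_congr rfl hv1, Finset.sum_congr rfl hv2,
          Finset.sum_const, Finset.sum_const, nsmul_eq_mul, nsmul_eq_mul,
          Finset.filter_filter, Finset.filter_filter]
        have hnotone : (A.filter (fun U => (U.2 p = r ∧ U.2 q = s) ∧ ¬ U.1 p * U.1 q = 1))
            = A.filter (fun U => (U.2 p = r ∧ U.2 q = s) ∧ U.1 p * U.1 q = -1) := by
          apply Finset.filter_congr
          intro U _
          constructor
          · rintro ⟨h1, h2⟩
            refine ⟨h1, ?_⟩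
            rcases Int.units_eq_one_or (U.1 p * U.1 q) with h3|h3
            · exact absurd h3 h2
            · exact h3
          · rintro ⟨h1, h2⟩
            exact ⟨h1, by rw [h2]; decide⟩
        rw [hnotone]
        ring
      -- balanced condition gives cancellation of paired good fibers
      have hpair : ∀ r s : Fin (2*n), P (r, s) → h (r, s) + h (s, r) = 0 := by
        intro r s hPrs
        obtain ⟨h1, h2, h3, h4, h5⟩ := hPrs
        have hPsr : P (s, r) := ⟨h3, h4, h1, h2, fun hss => h5 hss.symm⟩
        rw [hhval r s ⟨h1, h2, h3, h4, h5⟩, hhval s r hPsr]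
        -- translate the balanced condition
        have hbal2 := hbal.2 p q r s hpq (fun hh => h1 hh.symm) (fun hh => h3 hh.symm)
          (fun hh => h2 hh.symm) (fun hh => h4 hh.symm) h5
        have htrans : ∀ v : ℤˣ,
            (A.filter (fun U => U.1 p * U.1 q = v ∧
              (U.2 r = p ∧ U.2 s = q ∨ U.2 r = q ∧ U.2 s = p))).card
            = (A.filter (fun U => (U.2 p = r ∧ U.2 q = s) ∧ U.1 p * U.1 q = v)).card
              + (A.filter (fun U => (U.2 p = s ∧ U.2 q = r) ∧ U.1 p * U.1 q = v)).card := by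
          intro v
          have hcg : A.filter (fun U => U.1 p * U.1 q = v ∧
              (U.2 r = p ∧ U.2 s = q ∨ U.2 r = q ∧ U.2 s = p))
              = A.filter (fun U => ((U.2 p = r ∧ U.2 q = s) ∧ U.1 p * U.1 q = v) ∨
                  ((U.2 p = s ∧ U.2 q = r) ∧ U.1 p * U.1 q = v)) := by
            apply Finset.filter_congr
            intro U hU
            constructor
            · rintro ⟨hv, hd⟩
              rcases hd with ⟨ha1, ha2⟩|⟨ha1, ha2⟩
              · exact Or.inl ⟨⟨hinv U hU r p ha1, hinv U hU s q ha2⟩, hv⟩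
              · exact Or.inr ⟨⟨hinv U hU s p ha2, hinv U hU r q ha1⟩, hv⟩
            · rintro (⟨⟨ha1, ha2⟩, hv⟩|⟨⟨ha1, ha2⟩, hv⟩)
              · exact ⟨hv, Or.inl ⟨hinv U hU p r ha1, hinv U hU q s ha2⟩⟩
              · exact ⟨hv, Or.inr ⟨hinv U hU q r ha2, hinv U hU p s ha1⟩⟩
          rw [hcg, Finset.filter_or, Finset.card_union_of_disjoint]
          rw [Finset.disjoint_left]
          rintro U hU1 hU2
          have e1 := (Finset.mem_filter.mp hU1).2.1.1
          have e2 := (Finset.mem_filter.mp hU2).2.1.1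
          exact h5 (by rw [← e1, ← e2])
        have hb1 := htrans 1
        have hb2 := htrans (-1)
        rw [hb1, hb2] at hbal2
        have hcast : (((A.filter (fun U => (U.2 p = r ∧ U.2 q = s) ∧ U.1 p * U.1 q = 1)).card : ℝ)
            - ((A.filter (fun U => (U.2 p = r ∧ U.2 q = s) ∧ U.1 p * U.1 q = -1)).card : ℝ))
            + (((A.filter (fun U => (U.2 p = s ∧ U.2 q = r) ∧ U.1 p * U.1 q = 1)).card : ℝ)
            - ((A.filter (fun U => (U.2 p = s ∧ U.2 q = r) ∧ U.1 p * U.1 q = -1)).card : ℝ)) = 0 := by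
          have := hbal2
          -- hbal2 : N₋(r,s) + N₋(s,r) = N₊(r,s) + N₊(s,r) (as ℕ)
          have hR : ((A.filter (fun U => (U.2 p = r ∧ U.2 q = s) ∧ U.1 p * U.1 q = -1)).card : ℝ)
              + ((A.filter (fun U => (U.2 p = s ∧ U.2 q = r) ∧ U.1 p * U.1 q = -1)).card : ℝ)
              = ((A.filter (fun U => (U.2 p = r ∧ U.2 q = s) ∧ U.1 p * U.1 q = 1)).card : ℝ)
              + ((A.filter (fun U => (U.2 p = s ∧ U.2 q = r) ∧ U.1 p * U.1 q = 1)).card : ℝ) := by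
            exact_mod_cast this
          linarith
        linear_combination (a r * a s) * hcast
      -- now compute the total sum
      have hsplit := Finset.sum_filter_add_sum_filter_not
        (univ : Finset (Fin (2*n) × Fin (2*n))) P h
      have hbad : ∑ y ∈ (univ : Finset (Fin (2*n) × Fin (2*n))).filter (fun y => ¬ P y), h y
          = -(C * (a p * a q)) := by
        rw [Finset.sum_eq_single_of_mem (q, p)]
        · exact hfibqp
        · rw [Finset.mem_filter]
          refine ⟨Finset.mem_univ _, ?_⟩
          exact fun hcon => hcon.2.1 rfl
        · intro y hy hyne
          have hny := (Finset.mem_filter.mp hy).2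
          apply hfib0 y hyne
          by_contra hcon
          push_neg at hcon
          exact hny ⟨hcon.1, hcon.2.1, hcon.2.2.1, hcon.2.2.2.1, hcon.2.2.2.2⟩
      have hgood : ∑ y ∈ (univ : Finset (Fin (2*n) × Fin (2*n))).filter P, h y = 0 := by
        set T := (univ : Finset (Fin (2*n) × Fin (2*n))).filter P with hT
        have hswapmem : ∀ y ∈ T, (y.2, y.1) ∈ T := by
          intro y hy
          rw [hT, Finset.mem_filter] at hy ⊢
          obtain ⟨_, h1, h2, h3, h4, h5⟩ := hy
          exact ⟨Finset.mem_univ _, h3, h4, h1, h2, fun hss => h5 hss.symm⟩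
        have hswap : ∑ y ∈ T, h y = ∑ y ∈ T, h (y.2, y.1) := by
          apply Finset.sum_nbij' (i := fun y => (y.2, y.1)) (j := fun y => (y.2, y.1))
          · exact hswapmem
          · exact hswapmem
          · intro y _; rfl
          · intro y _; rfl
          · intro y _; rfl
        have hzero : ∑ y ∈ T, (h y + h (y.2, y.1)) = 0 := by
          apply Finset.sum_eq_zero
          intro y hy
          have hPy := (Finset.mem_filter.mp hy).2
          exact hpair y.1 y.2 hPy
        rw [Finset.sum_add_distrib, ← hswap] at hzero
        linarith
      rw [← hsplit, hgood, hbad]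
      ring
  -- the three conclusions
  refine ⟨?_, ?_, ?_⟩
  · intro p
    simp only [hcoord, pow_two]
    simpa using key p p
  · intro p q hpq
    simp only [hcoord]
    have h := key p q
    rw [if_neg hpq] at h
    exact h
  · intro x
    have hCne : C ≠ 0 := ne_of_gt hCpos
    have hsqC : Real.sqrt C * Real.sqrt C = C := Real.mul_self_sqrt hCpos.le
    have hinner : ∀ y : EuclideanSpace ℝ (Fin (2*n)), ⟪y, x⟫ = ∑ q, y q * x q := by
      intro y; simp [PiLp.inner_apply, mul_comm]
    ext p
    have happ2 : (∑ U ∈ A, (∑ q, Uact n U a q * x q) • Uact n U a) p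
        = ∑ U ∈ A, (∑ q, Uact n U a q * x q) * Uact n U a p := by
      rw [WithLp.ofLp_sum, Finset.sum_apply p A _]
      simp [PiLp.smul_apply]
    simp only [PiLp.smul_apply, PiLp.add_apply, smul_eq_mul, hinner]
    rw [happ2]
    have hmain : (∑ q, Real.sqrt C * a q * x q) * (Real.sqrt C * a p)
          + ∑ U ∈ A, (∑ q, Uact n U a q * x q) * Uact n U a p = x p * C := by
      have h1 : (∑ q, Real.sqrt C * a q * x q) * (Real.sqrt C * a p)
          = ∑ q, x q * (C * (a q * a p)) := by
        rw [Finset.sum_mul]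
        apply Finset.sum_congr rfl
        intro q _
        rw [show (Real.sqrt C * a q * x q) * (Real.sqrt C * a p)
            = (Real.sqrt C * Real.sqrt C) * (x q * (a q * a p)) from by ring, hsqC]
        ring
      have h2 : ∑ U ∈ A, (∑ q, Uact n U a q * x q) * Uact n U a p
          = ∑ q, x q * (∑ U ∈ A, Uact n U a q * Uact n U a p) := by
        calc ∑ U ∈ A, (∑ q, Uact n U a q * x q) * Uact n U a p
            = ∑ U ∈ A, ∑ q, x q * (Uact n U a q * Uact n U a p) := by
              apply Finset.sum_congr rfl
              intro U _
              rw [Finset.sum_mul]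
              apply Finset.sum_congr rfl
              intros; ring
          _ = ∑ q, ∑ U ∈ A, x q * (Uact n U a q * Uact n U a p) := Finset.sum_comm
          _ = ∑ q, x q * (∑ U ∈ A, Uact n U a q * Uact n U a p) := by
              apply Finset.sum_congr rfl
              intros
              rw [Finset.mul_sum]
      rw [h1, h2, ← Finset.sum_add_distrib]
      have h3 : ∀ q : Fin (2*n), q ∈ (univ : Finset (Fin (2*n))) →
          x q * (C * (a q * a p)) + x q * (∑ U ∈ A, Uact n U a q * Uact n U a p)
            = if q = p then x q * C else 0 := by
        intro q _
        rw [← mul_add, key q p]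
        by_cases hqp : q = p
        · rw [if_pos hqp, if_pos hqp]
        · rw [if_neg hqp, if_neg hqp, mul_zero]
      rw [Finset.sum_congr rfl h3, Finset.sum_ite_eq' univ p (fun q => x q * C)]
      simp
    rw [hmain]
    field_simp
end

section
/- Let n >= 1 and let A be a balanced subset of A_{2n}. Then for every a on the unit sphere S^{2n-1}, the collection {U(a) : U in A} is a finite unit tight frame for the tangent space T_a S^{2n-1} = a^perp, with frame constant #A/(2n-1). That is, for all x in R^{2n} with <x,a> = 0, x = ((2n-1)/#A) * sum_{U in A} <x, U(a)> U(a). -/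
open Finset RealInnerProductSpace

lemma inner_coords {m : ℕ} (x y : EuclideanSpace ℝ (Fin m)) : ⟪x, y⟫ = ∑ i, x i * y i := by
  simp [PiLp.inner_apply, RCLike.inner_apply, mul_comm]

lemma units_cast_mul_self (u : ℤˣ) : ((u:ℤ):ℝ) * ((u:ℤ):ℝ) = 1 := by
  rcases Int.units_eq_one_or u with h | h <;> simp [h]

lemma sum_sq_eq_one {m : ℕ} (a : EuclideanSpace ℝ (Fin m)) (ha : ‖a‖ = 1) :
    ∑ i, (a i)^2 = 1 := by
  have h := real_inner_self_eq_norm_sq a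
  rw [inner_coords, ha] at h
  simpa [sq] using h

lemma adm_ne {n : ℕ} {U : (Fin (2*n) → ℤˣ) × (Fin (2*n) → Fin (2*n))}
    (h : Adm n U) (i : Fin (2*n)) : U.2 i ≠ i := by
  intro he
  have h1 := h.1 i
  rw [he] at h1
  rcases Int.units_eq_one_or (U.1 i) with h2 | h2 <;> rw [h2] at h1 <;> simp at h1

lemma adm_norm {n : ℕ} {U : (Fin (2*n) → ℤˣ) × (Fin (2*n) → Fin (2*n))}
    (h : Adm n U) (a : EuclideanSpace ℝ (Fin (2*n))) (ha : ‖a‖ = 1) :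
    ‖Uact n U a‖ = 1 := by
  have hinv : Function.Involutive U.2 := h.2
  have hsq : ‖Uact n U a‖^2 = ∑ i, ((Uact n U a) i)^2 := by
    rw [← real_inner_self_eq_norm_sq, inner_coords]
    simp [sq]
  have h2 : ∑ i, ((Uact n U a) i)^2 = ∑ i, (a (U.2 i))^2 := by
    refine Finset.sum_congr rfl fun i _ => ?_
    rw [Uact, PiLp.toLp_apply, mul_pow, sq, units_cast_mul_self, one_mul]
  have h3 : ∑ i, (a (U.2 i))^2 = ∑ i, (a i)^2 :=
    Equiv.sum_comp hinv.toPerm (fun i => (a i)^2)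
  have h5 : ‖Uact n U a‖^2 = 1 := by rw [hsq, h2, h3, sum_sq_eq_one a ha]
  nlinarith [norm_nonneg (Uact n U a)]

lemma adm_orth {n : ℕ} {U : (Fin (2*n) → ℤˣ) × (Fin (2*n) → Fin (2*n))}
    (h : Adm n U) (a : EuclideanSpace ℝ (Fin (2*n))) :
    ⟪Uact n U a, a⟫ = 0 := by
  have hinv : Function.Involutive U.2 := h.2
  rw [inner_coords]
  set σ : Equiv.Perm (Fin (2*n)) := Function.Involutive.toPerm _ hinv with hσ
  set f : Fin (2*n) → ℝ := fun i => (Uact n U a) i * a i with hf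
  have key : ∑ i, f i = ∑ i, f (σ i) := (Equiv.sum_comp σ f).symm
  have hneg : ∀ i, f (σ i) = - f i := by
    intro i
    simp only [hf, hσ, Uact, PiLp.toLp_apply, Function.Involutive.coe_toPerm]
    rw [h.2 i]
    have he : ((U.1 i : ℤ) : ℝ) = -((U.1 (U.2 i) : ℤ) : ℝ) := by
      rw [h.1 i]; push_cast; ring
    rw [he]; ring
  have : ∑ i, f i = - ∑ i, f i := by
    calc ∑ i, f i = ∑ i, f (σ i) := key
      _ = ∑ i, -f i := Finset.sum_congr rfl fun i _ => hneg i
      _ = - ∑ i, f i := by rw [Finset.sum_neg_distrib]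
  linarith

lemma diag_sum {n : ℕ} (A : Finset ((Fin (2*n) → ℤˣ) × (Fin (2*n) → Fin (2*n))))
    (hA : ∀ U ∈ A, Adm n U) (hbal : IsBalanced n A)
    (a : EuclideanSpace ℝ (Fin (2*n))) (ha : ‖a‖ = 1) (j : Fin (2*n)) :
    ∑ U ∈ A, (a (U.2 j))^2 = (A.card : ℝ) / (2*(n:ℝ) - 1) * (1 - (a j)^2) := by
  set m : ℝ := (A.card : ℝ) / (2*(n:ℝ) - 1) with hm
  have step1 : ∑ U ∈ A, (a (U.2 j))^2
      = ∑ U ∈ A, ∑ q, (if U.2 j = q then (a q)^2 else 0) := by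
    refine Finset.sum_congr rfl fun U _ => ?_
    rw [Finset.sum_ite_eq]
    simp
  rw [step1, Finset.sum_comm]
  have step2 : ∀ q : Fin (2*n), ∑ U ∈ A, (if U.2 j = q then (a q)^2 else 0)
      = ((A.filter (fun U => U.2 j = q)).card : ℝ) * (a q)^2 := by
    intro q
    rw [← Finset.sum_filter, Finset.sum_const, nsmul_eq_mul]
  rw [Finset.sum_congr rfl fun q _ => step2 q]
  rw [Finset.sum_eq_sum_sdiff_singleton_add (Finset.mem_univ j)
    (fun q => ((A.filter (fun U => U.2 j = q)).card : ℝ) * (a q)^2)]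
  have hj0 : (A.filter (fun U => U.2 j = j)) = ∅ := by
    refine Finset.filter_eq_empty_iff.mpr fun U hU => ?_
    exact adm_ne (hA U hU) j
  have hq : ∀ q ∈ Finset.univ \ {j},
      ((A.filter (fun U => U.2 j = q)).card : ℝ) * (a q)^2 = m * (a q)^2 := by
    intro q hqmem
    have hqj : j ≠ q := by
      simp only [Finset.mem_sdiff, Finset.mem_singleton] at hqmem
      exact fun h => hqmem.2 h.symm
    rw [hbal.1 j q hqj, hm]
  rw [Finset.sum_congr rfl hq, hj0]
  have hsum : ∑ q ∈ Finset.univ \ {j}, (a q)^2 = 1 - (a j)^2 := by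
    have h2 := Finset.sum_eq_sum_sdiff_singleton_add (Finset.mem_univ j) (fun q => (a q)^2)
    rw [sum_sq_eq_one a ha] at h2
    linarith
  rw [← Finset.mul_sum, hsum]
  simp

lemma offdiag_sum {n : ℕ} (A : Finset ((Fin (2*n) → ℤˣ) × (Fin (2*n) → Fin (2*n))))
    (hA : ∀ U ∈ A, Adm n U) (hbal : IsBalanced n A)
    (a : EuclideanSpace ℝ (Fin (2*n))) (i j : Fin (2*n)) (hij : i ≠ j) :
    ∑ U ∈ A, ((U.1 (U.2 i) : ℤ):ℝ) * ((U.1 (U.2 j) : ℤ):ℝ) * (a (U.2 i) * a (U.2 j))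
      = -((A.card : ℝ)/(2*(n:ℝ)-1)) * (a i * a j) := by
  classical
  set F : ((Fin (2*n) → ℤˣ) × (Fin (2*n) → Fin (2*n))) → ℝ :=
    fun U => ((U.1 (U.2 i) : ℤ):ℝ) * ((U.1 (U.2 j) : ℤ):ℝ) * (a (U.2 i) * a (U.2 j)) with hF
  rw [← Finset.sum_filter_add_sum_filter_not A (fun U => U.2 j = i) F]
  -- Part A : the "swap" part
  have partA : ∑ U ∈ A.filter (fun U => U.2 j = i), F U
      = -((A.card : ℝ)/(2*(n:ℝ)-1)) * (a i * a j) := by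
    have hterm : ∀ U ∈ A.filter (fun U => U.2 j = i), F U = -(a i * a j) := by
      intro U hU
      rw [Finset.mem_filter] at hU
      obtain ⟨hUA, hji⟩ := hU
      have hadm := hA U hUA
      have hii : U.2 i = j := by rw [← hji, hadm.2]
      simp only [hF]
      rw [hii, hji]
      have he : ((U.1 j : ℤ):ℝ) = -((U.1 i : ℤ):ℝ) := by
        have := hadm.1 j; rw [hji] at this; rw [this]; push_cast; ring
      rw [he]
      linear_combination (-(a i * a j)) * units_cast_mul_self (U.1 i)
    rw [Finset.sum_congr rfl hterm, Finset.sum_const, nsmul_eq_mul]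
    have hcard := hbal.1 j i (Ne.symm hij)
    rw [hcard]; ring
  -- Part B : the rest sums to zero
  have partB : ∑ U ∈ A.filter (fun U => ¬ U.2 j = i), F U = 0 := by
    set B := A.filter (fun U => ¬ U.2 j = i) with hB
    set G : Fin (2*n) × Fin (2*n) → ℝ :=
      fun pq => ∑ U ∈ B.filter (fun U => (U.2 i, U.2 j) = pq), F U with hG
    have hfib : ∑ pq : Fin (2*n) × Fin (2*n), G pq = ∑ U ∈ B, F U :=
      Finset.sum_fiberwise B (fun U => (U.2 i, U.2 j)) F
    -- empty fibers in degenerate cases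
    have hfiber : ∀ p q : Fin (2*n), (p = q ∨ p = i ∨ p = j ∨ q = i ∨ q = j) →
        B.filter (fun U => (U.2 i, U.2 j) = (p, q)) = ∅ := by
      intro p q hdeg
      refine Finset.filter_eq_empty_iff.mpr fun U hU => ?_
      rw [hB, Finset.mem_filter] at hU
      obtain ⟨hUA, hji⟩ := hU
      have hadm := hA U hUA
      intro heq
      rw [Prod.mk.injEq] at heq
      obtain ⟨hip, hjq⟩ := heq
      have hinj : Function.Injective U.2 := Function.Involutive.injective hadm.2
      rcases hdeg with h | h | h | h | h
      · exact hij (hinj (by rw [hip, hjq, h]))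
      · exact adm_ne hadm i (by rw [hip, h])
      · exact hji (by rw [← hip] at h; rw [← h, hadm.2])
      · exact hji (by rw [hjq, h])
      · exact adm_ne hadm j (by rw [hjq, h])
    -- each fiber plus its swap vanishes
    have hswap : ∀ pq : Fin (2*n) × Fin (2*n), G pq + G pq.swap = 0 := by
      rintro ⟨p, q⟩
      simp only [Prod.swap_prod_mk]
      by_cases hdeg : p = q ∨ p = i ∨ p = j ∨ q = i ∨ q = j
      · have h1 : G (p, q) = 0 := by rw [hG]; simp only; rw [hfiber p q hdeg, Finset.sum_empty]
        have h2 : G (q, p) = 0 := by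
          rw [hG]; simp only
          rw [hfiber q p (by tauto), Finset.sum_empty]
        rw [h1, h2, add_zero]
      · push_neg at hdeg
        obtain ⟨hpq, hpi, hpj, hqi, hqj⟩ := hdeg
        -- identify the fibers as filters of A
        have hf1 : B.filter (fun U => (U.2 i, U.2 j) = (p, q))
            = A.filter (fun U => U.2 i = p ∧ U.2 j = q) := by
          rw [hB, Finset.filter_filter]
          refine Finset.filter_congr fun U hU => ?_
          simp only [Prod.mk.injEq]
          constructor
          · rintro ⟨_, h1, h2⟩; exact ⟨h1, h2⟩
          · rintro ⟨h1, h2⟩; exact ⟨by rw [h2]; exact hqi, h1, h2⟩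
        have hf2 : B.filter (fun U => (U.2 i, U.2 j) = (q, p))
            = A.filter (fun U => U.2 i = q ∧ U.2 j = p) := by
          rw [hB, Finset.filter_filter]
          refine Finset.filter_congr fun U hU => ?_
          simp only [Prod.mk.injEq]
          constructor
          · rintro ⟨_, h1, h2⟩; exact ⟨h1, h2⟩
          · rintro ⟨h1, h2⟩; exact ⟨by rw [h2]; exact hpi, h1, h2⟩
        set c : ((Fin (2*n) → ℤˣ) × (Fin (2*n) → Fin (2*n))) → ℝ :=
          fun U => ((U.1 p * U.1 q : ℤˣ) : ℤ) with hc
        have hFval1 : ∀ U ∈ A.filter (fun U => U.2 i = p ∧ U.2 j = q),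
            F U = c U * (a p * a q) := by
          intro U hU
          rw [Finset.mem_filter] at hU
          obtain ⟨-, h1, h2⟩ := hU
          simp only [hF, hc]
          rw [h1, h2]
          push_cast; ring
        have hFval2 : ∀ U ∈ A.filter (fun U => U.2 i = q ∧ U.2 j = p),
            F U = c U * (a p * a q) := by
          intro U hU
          rw [Finset.mem_filter] at hU
          obtain ⟨-, h1, h2⟩ := hU
          simp only [hF, hc]
          rw [h1, h2]
          push_cast; ring
        have hdisj : Disjoint (A.filter (fun U => U.2 i = p ∧ U.2 j = q))
            (A.filter (fun U => U.2 i = q ∧ U.2 j = p)) := by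
          refine Finset.disjoint_filter.mpr fun U _ h1 h2 => ?_
          exact hpq (by rw [← h1.1, h2.1])
        have hunion : A.filter (fun U => U.2 i = p ∧ U.2 j = q)
              ∪ A.filter (fun U => U.2 i = q ∧ U.2 j = p)
            = A.filter (fun U => (U.2 i = p ∧ U.2 j = q) ∨ (U.2 i = q ∧ U.2 j = p)) :=
          (Finset.filter_or _ _ _).symm
        have key : G (p, q) + G (q, p)
            = (∑ U ∈ A.filter (fun U =>
                (U.2 i = p ∧ U.2 j = q) ∨ (U.2 i = q ∧ U.2 j = p)), c U) * (a p * a q) := by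
          rw [hG]; simp only
          rw [hf1, hf2, Finset.sum_congr rfl hFval1, Finset.sum_congr rfl hFval2,
            ← Finset.sum_union hdisj, hunion, Finset.sum_mul]
        rw [key]
        -- the sum of signs vanishes by balance condition (ii)
        have hcsum : ∑ U ∈ A.filter (fun U =>
            (U.2 i = p ∧ U.2 j = q) ∨ (U.2 i = q ∧ U.2 j = p)), c U = 0 := by
          set D := A.filter (fun U =>
            (U.2 i = p ∧ U.2 j = q) ∨ (U.2 i = q ∧ U.2 j = p)) with hD
          have hcval : ∀ U, c U = if U.1 p * U.1 q = 1 then (1:ℝ) else -1 := by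
            intro U
            rcases Int.units_eq_one_or (U.1 p * U.1 q) with h | h <;>
              simp only [hc, h] <;> norm_num
          rw [Finset.sum_congr rfl fun U _ => hcval U, Finset.sum_ite,
            Finset.sum_const, Finset.sum_const, nsmul_eq_mul, nsmul_eq_mul]
          have hplus : D.filter (fun U => U.1 p * U.1 q = 1)
              = A.filter (fun U => U.1 p * U.1 q = 1 ∧
                  (U.2 i = p ∧ U.2 j = q ∨ U.2 i = q ∧ U.2 j = p)) := by
            rw [hD, Finset.filter_filter]
            exact Finset.filter_congr fun U _ => by tauto
          have hminus : D.filter (fun U => ¬ U.1 p * U.1 q = 1)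
              = A.filter (fun U => U.1 p * U.1 q = -1 ∧
                  (U.2 i = p ∧ U.2 j = q ∨ U.2 i = q ∧ U.2 j = p)) := by
            rw [hD, Finset.filter_filter]
            refine Finset.filter_congr fun U _ => ?_
            rcases Int.units_eq_one_or (U.1 p * U.1 q) with h | h <;> simp [h] <;> tauto
          rw [hplus, hminus, hbal.2 p q i j hpq hpi hpj hqi hqj hij]
          ring
        rw [hcsum, zero_mul]
    -- conclude by the swap involution
    have e : (Fin (2*n) × Fin (2*n)) ≃ (Fin (2*n) × Fin (2*n)) := Equiv.prodComm _ _
    have hS : ∑ pq : Fin (2*n) × Fin (2*n), G pq.swap = ∑ pq : Fin (2*n) × Fin (2*n), G pq :=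
      Equiv.sum_comp (Equiv.prodComm _ _) G
    have hzero : (∑ pq : Fin (2*n) × Fin (2*n), G pq)
        + ∑ pq : Fin (2*n) × Fin (2*n), G pq.swap = 0 := by
      rw [← Finset.sum_add_distrib]
      exact Finset.sum_eq_zero fun pq _ => hswap pq
    have : ∑ pq : Fin (2*n) × Fin (2*n), G pq = 0 := by rw [hS] at hzero; linarith
    rw [← hfib, this]
  rw [partA, partB, add_zero]

lemma key_coord {n : ℕ} (A : Finset ((Fin (2*n) → ℤˣ) × (Fin (2*n) → Fin (2*n))))
    (hA : ∀ U ∈ A, Adm n U) (hbal : IsBalanced n A)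
    (a : EuclideanSpace ℝ (Fin (2*n))) (ha : ‖a‖ = 1)
    (x : EuclideanSpace ℝ (Fin (2*n))) (hx : ⟪x, a⟫ = 0) (j : Fin (2*n)) :
    ∑ U ∈ A, ⟪x, Uact n U a⟫ * (Uact n U a j)
      = (A.card : ℝ) / (2*(n:ℝ) - 1) * x j := by
  classical
  set m : ℝ := (A.card : ℝ) / (2*(n:ℝ) - 1) with hm
  have h1 : ∀ U ∈ A, ⟪x, Uact n U a⟫ * (Uact n U a j)
      = ∑ i, x i * (((U.1 (U.2 i) : ℤ):ℝ) * ((U.1 (U.2 j) : ℤ):ℝ) * (a (U.2 i) * a (U.2 j))) := by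
    intro U _
    rw [inner_coords, Finset.sum_mul]
    refine Finset.sum_congr rfl fun i _ => ?_
    simp only [Uact, PiLp.toLp_apply]
    ring
  rw [Finset.sum_congr rfl h1, Finset.sum_comm]
  have h2 : ∀ i : Fin (2*n),
      ∑ U ∈ A, x i * (((U.1 (U.2 i) : ℤ):ℝ) * ((U.1 (U.2 j) : ℤ):ℝ) * (a (U.2 i) * a (U.2 j)))
      = x i * ∑ U ∈ A, ((U.1 (U.2 i) : ℤ):ℝ) * ((U.1 (U.2 j) : ℤ):ℝ) * (a (U.2 i) * a (U.2 j)) :=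
    fun i => (Finset.mul_sum _ _ _).symm
  rw [Finset.sum_congr rfl fun i _ => h2 i,
    Finset.sum_eq_sum_sdiff_singleton_add (Finset.mem_univ j)]
  have h3 : ∑ U ∈ A, ((U.1 (U.2 j) : ℤ):ℝ) * ((U.1 (U.2 j) : ℤ):ℝ) * (a (U.2 j) * a (U.2 j))
      = ∑ U ∈ A, (a (U.2 j))^2 := by
    refine Finset.sum_congr rfl fun U _ => ?_
    rw [units_cast_mul_self, one_mul, sq]
  have h4 : ∀ i ∈ Finset.univ \ {j},
      x i * ∑ U ∈ A, ((U.1 (U.2 i) : ℤ):ℝ) * ((U.1 (U.2 j) : ℤ):ℝ) * (a (U.2 i) * a (U.2 j))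
      = (-m * a j) * (x i * a i) := by
    intro i hi
    have hij : i ≠ j := by
      simp only [Finset.mem_sdiff, Finset.mem_singleton] at hi
      exact hi.2
    rw [offdiag_sum A hA hbal a i j hij, ← hm]
    ring
  rw [Finset.sum_congr rfl h4, h3, diag_sum A hA hbal a ha j, ← hm, ← Finset.mul_sum]
  have hxa : ∑ i, x i * a i = 0 := by rw [← inner_coords]; exact hx
  have h5 : ∑ i ∈ Finset.univ \ {j}, x i * a i = -(x j * a j) := by
    have h6 := Finset.sum_eq_sum_sdiff_singleton_add (Finset.mem_univ j) (fun i => x i * a i)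
    rw [hxa] at h6
    simp only at h6
    linarith
  rw [h5]
  ring


theorem balanced_gives_moving_funtf (n : ℕ) (hn : 1 ≤ n)
    (A : Finset ((Fin (2*n) → ℤˣ) × (Fin (2*n) → Fin (2*n))))
    (hA : ∀ U ∈ A, Adm n U) (hA0 : A.Nonempty) (hbal : IsBalanced n A)
    (a : EuclideanSpace ℝ (Fin (2*n))) (ha : ‖a‖ = 1) :
    (∀ U ∈ A, ‖Uact n U a‖ = 1 ∧ ⟪Uact n U a, a⟫ = 0) ∧
    (∀ x : EuclideanSpace ℝ (Fin (2*n)), ⟪x, a⟫ = 0 →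
      x = ((2*(n:ℝ) - 1) / A.card) • ∑ U ∈ A, ⟪x, Uact n U a⟫ • Uact n U a) := by
  constructor
  · intro U hU
    exact ⟨adm_norm (hA U hU) a ha, adm_orth (hA U hU) a⟩
  · intro x hx
    have hden : (2*(n:ℝ) - 1) ≠ 0 := by
      have : (1:ℝ) ≤ n := by exact_mod_cast hn
      intro h; linarith
    have hcard : ((A.card : ℝ)) ≠ 0 := by
      have : 0 < A.card := Finset.card_pos.mpr hA0
      positivity
    ext j
    have hsum : (∑ U ∈ A, ⟪x, Uact n U a⟫ • Uact n U a) j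
        = ∑ U ∈ A, ⟪x, Uact n U a⟫ * (Uact n U a j) := by
      rw [WithLp.ofLp_sum, Finset.sum_apply j A (fun U => (⟪x, Uact n U a⟫ • Uact n U a).ofLp)]
      exact Finset.sum_congr rfl fun U _ => rfl
    rw [PiLp.smul_apply, hsum, key_coord A hA hbal a ha x hx j, smul_eq_mul]
    field_simp
end

section
/- Let n >= 1 and let A be a subset of A_{2n} such that there exist distinct p, q in {1,...,2n} with #{U in A : k_p = q} != #A/(2n-1). Then with a = (e_p + e_q)/sqrt(2), (#A/(2n-1)) * <a, e_p><a, e_q> + sum_{U in A} <U(a), e_p><U(a), e_q> = (1/2)(#A/(2n-1) - #{U in A : k_p = q}) != 0; hence {U(a) : U in A} is not a tight frame for T_a S^{2n-1} with frame constant #A/(2n-1). -/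
open Finset RealInnerProductSpace

set_option maxHeartbeats 1000000 in
theorem unbalanced_i_not_tight_frame (n : ℕ) (hn : 1 ≤ n)
    (A : Finset ((Fin (2*n) → ℤˣ) × (Fin (2*n) → Fin (2*n))))
    (hA : ∀ U ∈ A, Adm n U) (p q : Fin (2*n)) (hpq : p ≠ q)
    (hcount : ((A.filter (fun U => U.2 p = q)).card : ℝ) ≠ (A.card : ℝ) / (2*(n:ℝ) - 1))
    (a : EuclideanSpace ℝ (Fin (2*n)))
    (ha : a = (Real.sqrt 2)⁻¹ •
      (EuclideanSpace.single p (1:ℝ) + EuclideanSpace.single q (1:ℝ))) :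
    ((A.card : ℝ) / (2*(n:ℝ) - 1)) * (⟪a, EuclideanSpace.single p (1:ℝ)⟫ *
        ⟪a, EuclideanSpace.single q (1:ℝ)⟫) +
      ∑ U ∈ A, ⟪Uact n U a, EuclideanSpace.single p (1:ℝ)⟫ *
        ⟪Uact n U a, EuclideanSpace.single q (1:ℝ)⟫ =
      (1/2) * ((A.card : ℝ) / (2*(n:ℝ) - 1) - (A.filter (fun U => U.2 p = q)).card) ∧
    ((A.card : ℝ) / (2*(n:ℝ) - 1)) * (⟪a, EuclideanSpace.single p (1:ℝ)⟫ *
        ⟪a, EuclideanSpace.single q (1:ℝ)⟫) +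
      ∑ U ∈ A, ⟪Uact n U a, EuclideanSpace.single p (1:ℝ)⟫ *
        ⟪Uact n U a, EuclideanSpace.single q (1:ℝ)⟫ ≠ 0 ∧
    ¬ (∀ x : EuclideanSpace ℝ (Fin (2*n)), ⟪x, a⟫ = 0 →
      x = ((A.card : ℝ) / (2*(n:ℝ) - 1))⁻¹ • ∑ U ∈ A, ⟪x, Uact n U a⟫ • Uact n U a) := by
  set c : ℝ := (A.card : ℝ) / (2*(n:ℝ) - 1) with hc
  set M : ℕ := (A.filter (fun U => U.2 p = q)).card with hM
  have hs2 : Real.sqrt 2 * Real.sqrt 2 = 2 := Real.mul_self_sqrt (by norm_num)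
  have hs2' : (Real.sqrt 2)⁻¹ * (Real.sqrt 2)⁻¹ = 1/2 := by
    rw [← mul_inv, hs2]; norm_num
  have hap : a p = (Real.sqrt 2)⁻¹ := by rw [ha]; simp [hpq]
  have haq : a q = (Real.sqrt 2)⁻¹ := by rw [ha]; simp [hpq.symm]
  have haj : ∀ j, j ≠ p → j ≠ q → a j = 0 := by
    intro j h1 h2; rw [ha]; simp [h1, h2]
  -- key case analysis
  have key : ∀ U ∈ A,
      (U.2 p ≠ q ∧ (Uact n U a) p = 0 ∧ (Uact n U a) q = 0) ∨
      (U.2 p = q ∧ (Uact n U a) p * (Uact n U a) q = -(1/2) ∧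
        (Uact n U a) p + (Uact n U a) q = 0) := by
    intro U hU
    obtain ⟨hε, hk⟩ := hA U hU
    have hfp : ∀ i, U.2 i ≠ i := by
      intro i h
      have := hε i
      rw [h] at this
      have h2 : (U.1 i : ℤ) = -(U.1 i : ℤ) := by exact_mod_cast congrArg Units.val this
      rcases Int.units_eq_one_or (U.1 i) with h1 | h1 <;> rw [h1] at h2 <;> norm_num at h2
    by_cases hkq : U.2 p = q
    · right
      refine ⟨hkq, ?_, ?_⟩ <;>
      · have hkqp : U.2 q = p := by rw [← hkq, hk]
        have h1 : (Uact n U a) p = ((U.1 q : ℤ) : ℝ) * (Real.sqrt 2)⁻¹ := by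
          show ((U.1 (U.2 p) : ℤ) : ℝ) * a (U.2 p) = _
          rw [hkq, haq]
        have h2 : (Uact n U a) q = ((U.1 p : ℤ) : ℝ) * (Real.sqrt 2)⁻¹ := by
          show ((U.1 (U.2 q) : ℤ) : ℝ) * a (U.2 q) = _
          rw [hkqp, hap]
        have hεpq : U.1 p = - U.1 q := by rw [hε p, hkq]
        rw [h1, h2, hεpq]
        push_cast
        rcases Int.units_eq_one_or (U.1 q) with h3 | h3 <;> rw [h3] <;> push_cast <;>
          nlinarith [hs2']
    · left
      refine ⟨hkq, ?_, ?_⟩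
      · have : a (U.2 p) = 0 := haj _ (hfp p) hkq
        show ((U.1 (U.2 p) : ℤ) : ℝ) * a (U.2 p) = 0
        rw [this, mul_zero]
      · have hne : U.2 q ≠ p := by
          intro h
          apply hkq
          rw [← h, hk]
        have : a (U.2 q) = 0 := haj _ hne (hfp q)
        show ((U.1 (U.2 q) : ℤ) : ℝ) * a (U.2 q) = 0
        rw [this, mul_zero]
  -- inner products with singles
  have hip : ∀ x : EuclideanSpace ℝ (Fin (2*n)), ∀ j,
      ⟪x, EuclideanSpace.single j (1:ℝ)⟫ = x j := by
    intro x j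
    rw [EuclideanSpace.inner_single_right]
    simp
  -- the main sum
  have hsum : ∑ U ∈ A, ⟪Uact n U a, EuclideanSpace.single p (1:ℝ)⟫ *
      ⟪Uact n U a, EuclideanSpace.single q (1:ℝ)⟫ = -(1/2) * M := by
    have : ∀ U ∈ A, ⟪Uact n U a, EuclideanSpace.single p (1:ℝ)⟫ *
        ⟪Uact n U a, EuclideanSpace.single q (1:ℝ)⟫ =
        if U.2 p = q then -(1/2) else 0 := by
      intro U hU
      rw [hip, hip]
      rcases key U hU with ⟨h1, h2, h3⟩ | ⟨h1, h2, h3⟩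
      · rw [if_neg h1, h2, zero_mul]
      · rw [if_pos h1, h2]
    rw [Finset.sum_congr rfl this, Finset.sum_ite, Finset.sum_const, Finset.sum_const]
    simp [hM, mul_comm]
  have haip : ⟪a, EuclideanSpace.single p (1:ℝ)⟫ * ⟪a, EuclideanSpace.single q (1:ℝ)⟫
      = 1/2 := by rw [hip, hip, hap, haq, hs2']
  have part1 : c * (⟪a, EuclideanSpace.single p (1:ℝ)⟫ *
        ⟪a, EuclideanSpace.single q (1:ℝ)⟫) +
      ∑ U ∈ A, ⟪Uact n U a, EuclideanSpace.single p (1:ℝ)⟫ *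
        ⟪Uact n U a, EuclideanSpace.single q (1:ℝ)⟫ = (1/2) * (c - M) := by
    rw [haip, hsum]; ring
  have part2 : (1/2 : ℝ) * (c - M) ≠ 0 := by
    intro h
    apply hcount
    linarith
  refine ⟨part1, by rw [part1]; exact part2, ?_⟩
  -- part 3
  intro hframe
  have hden : (0:ℝ) < 2*(n:ℝ) - 1 := by
    have : (1:ℝ) ≤ n := by exact_mod_cast hn
    linarith
  have hAne : (0:ℝ) < A.card := by
    rcases Nat.eq_zero_or_pos A.card with h | h
    · exfalso
      apply hcount
      have hM0 : M = 0 := by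
        have := Finset.card_filter_le A (fun U => U.2 p = q)
        omega
      rw [hM0, hc, h]
      simp
    · exact_mod_cast h
  have hcpos : 0 < c := div_pos hAne hden
  set x : EuclideanSpace ℝ (Fin (2*n)) :=
    EuclideanSpace.single p (1:ℝ) - (Real.sqrt 2)⁻¹ • a with hx
  have hinner : ∀ y : EuclideanSpace ℝ (Fin (2*n)),
      ⟪y, a⟫ = (Real.sqrt 2)⁻¹ * (y p + y q) := by
    intro y
    rw [ha, real_inner_smul_right, inner_add_right,
      EuclideanSpace.inner_single_right, EuclideanSpace.inner_single_right]
    simp [mul_add]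
  have hxp : x p = 1/2 := by
    rw [hx]
    simp only [PiLp.sub_apply, PiLp.smul_apply, EuclideanSpace.single_apply,
      smul_eq_mul, hap]
    norm_num [hs2']
  have hxq : x q = -(1/2) := by
    rw [hx]
    simp only [PiLp.sub_apply, PiLp.smul_apply, EuclideanSpace.single_apply,
      smul_eq_mul, haq]
    rw [if_neg hpq.symm]
    norm_num [hs2']
  have hxa : ⟪x, a⟫ = 0 := by rw [hinner, hxp, hxq]; ring
  have hxU : ∀ U ∈ A, ⟪x, Uact n U a⟫ = (Uact n U a) p := by
    intro U hU
    rw [hx, inner_sub_left, real_inner_smul_left,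
      EuclideanSpace.inner_single_left]
    have hUa : ⟪a, Uact n U a⟫ = 0 := by
      rw [real_inner_comm, hinner]
      rcases key U hU with ⟨_, h2, h3⟩ | ⟨_, _, h3⟩
      · rw [h2, h3]; ring
      · rw [h3, mul_zero]
    rw [hUa, mul_zero, sub_zero]
    simp
  have hrhs : ∑ U ∈ A, ⟪x, Uact n U a⟫ * ⟪Uact n U a, EuclideanSpace.single q (1:ℝ)⟫
      = -(1/2) * M := by
    rw [← hsum]
    apply Finset.sum_congr rfl
    intro U hU
    rw [hxU U hU, hip, hip]
  have heq : x q = c⁻¹ * ∑ U ∈ A, ⟪x, Uact n U a⟫ *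
      ⟪Uact n U a, EuclideanSpace.single q (1:ℝ)⟫ := by
    have h0 := hframe x hxa
    calc x q = ⟪x, EuclideanSpace.single q (1:ℝ)⟫ := (hip x q).symm
      _ = ⟪c⁻¹ • ∑ U ∈ A, ⟪x, Uact n U a⟫ • Uact n U a,
            EuclideanSpace.single q (1:ℝ)⟫ := by rw [← h0]
      _ = c⁻¹ * ∑ U ∈ A, ⟪x, Uact n U a⟫ *
            ⟪Uact n U a, EuclideanSpace.single q (1:ℝ)⟫ := by
          rw [real_inner_smul_left, sum_inner]
          congr 1
          exact Finset.sum_congr rfl fun U _ => real_inner_smul_left _ _ _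
  rw [hrhs, hxq] at heq
  have hMc : (M:ℝ) = c := by
    have h1 : c * -(1/2 : ℝ) = c * (c⁻¹ * (-(1/2) * M)) := by rw [← heq]
    rw [← mul_assoc, mul_inv_cancel₀ hcpos.ne', one_mul] at h1
    linarith
  exact hcount hMc
end

section
/- Let n >= 1 and let A be a subset of A_{2n} such that there exist pairwise distinct p, q, r, s in {1,...,2n} with #{U in A : epsilon_p epsilon_q = 1, {k_r,k_s}={p,q}} != #{U in A : epsilon_p epsilon_q = -1, {k_r,k_s}={p,q}}. Then with a = (e_p + e_q)/sqrt(2), sum_{U in A} <U(a), e_r><U(a), e_s> != 0, hence {U(a) : U in A} is not a tight frame for T_a S^{2n-1}. -/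
open Finset RealInnerProductSpace

theorem unbalanced_ii_not_tight_frame (n : ℕ) (hn : 1 ≤ n)
    (A : Finset ((Fin (2*n) → ℤˣ) × (Fin (2*n) → Fin (2*n))))
    (hA : ∀ U ∈ A, Adm n U) (p q r s : Fin (2*n))
    (hpq : p ≠ q) (hpr : p ≠ r) (hps : p ≠ s) (hqr : q ≠ r) (hqs : q ≠ s) (hrs : r ≠ s)
    (hcount : (A.filter (fun U => U.1 p * U.1 q = 1 ∧
        (U.2 r = p ∧ U.2 s = q ∨ U.2 r = q ∧ U.2 s = p))).card ≠
      (A.filter (fun U => U.1 p * U.1 q = -1 ∧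
        (U.2 r = p ∧ U.2 s = q ∨ U.2 r = q ∧ U.2 s = p))).card)
    (a : EuclideanSpace ℝ (Fin (2*n)))
    (ha : a = (Real.sqrt 2)⁻¹ •
      (EuclideanSpace.single p (1:ℝ) + EuclideanSpace.single q (1:ℝ))) :
    (∑ U ∈ A, ⟪Uact n U a, EuclideanSpace.single r (1:ℝ)⟫ *
        ⟪Uact n U a, EuclideanSpace.single s (1:ℝ)⟫ ≠ 0) ∧
    ¬ (∃ C : ℝ, C > 0 ∧ ∀ x : EuclideanSpace ℝ (Fin (2*n)), ⟪x, a⟫ = 0 →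
      x = C⁻¹ • ∑ U ∈ A, ⟪x, Uact n U a⟫ • Uact n U a) := by
  have hc2 : (Real.sqrt 2)⁻¹ * (Real.sqrt 2)⁻¹ = 2⁻¹ := by
    rw [← mul_inv]
    rw [Real.mul_self_sqrt (by norm_num)]
  have hc2' : ((Real.sqrt 2)⁻¹ : ℝ) ^ 2 = 2⁻¹ := by rw [sq]; exact hc2
  -- values of `a`
  have haj : ∀ j : Fin (2*n), a j =
      (Real.sqrt 2)⁻¹ * ((if j = p then (1:ℝ) else 0) + (if j = q then (1:ℝ) else 0)) := by
    intro j
    rw [ha]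
    simp [EuclideanSpace.single_apply]
    split_ifs <;> ring
  have hap : a p = (Real.sqrt 2)⁻¹ := by
    rw [haj]; simp [hpq]
  have haq : a q = (Real.sqrt 2)⁻¹ := by
    rw [haj]; simp [hpq.symm]
  have ha0 : ∀ j : Fin (2*n), j ≠ p → j ≠ q → a j = 0 := by
    intro j h1 h2
    rw [haj]; simp [h1, h2]
  -- inner product with a single basis vector
  have hinner : ∀ (U : (Fin (2*n) → ℤˣ) × (Fin (2*n) → Fin (2*n))) (i : Fin (2*n)),
      ⟪Uact n U a, EuclideanSpace.single i (1:ℝ)⟫ = ((U.1 (U.2 i) : ℤ) : ℝ) * a (U.2 i) := by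
    intro U i
    rw [EuclideanSpace.inner_single_right]
    simp [Uact]
  -- the key pointwise computation
  have hval : ∀ U ∈ A,
      ⟪Uact n U a, EuclideanSpace.single r (1:ℝ)⟫ *
        ⟪Uact n U a, EuclideanSpace.single s (1:ℝ)⟫ =
      if (U.2 r = p ∧ U.2 s = q ∨ U.2 r = q ∧ U.2 s = p)
        then ((U.1 p * U.1 q : ℤˣ) : ℤ) * (2:ℝ)⁻¹ else 0 := by
    intro U hU
    obtain ⟨-, hk⟩ := hA U hU
    have hkinj : Function.Injective U.2 := Function.LeftInverse.injective hk
    have hkrs : U.2 r ≠ U.2 s := fun h => hrs (hkinj h)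
    rw [hinner, hinner]
    by_cases hcond : U.2 r = p ∧ U.2 s = q ∨ U.2 r = q ∧ U.2 s = p
    · rw [if_pos hcond]
      rcases hcond with ⟨h1, h2⟩ | ⟨h1, h2⟩ <;> rw [h1, h2] <;>
        · rw [hap, haq]
          push_cast
          ring_nf
          rw [hc2']
          ring
    · rw [if_neg hcond]
      push_neg at hcond
      by_cases h1 : U.2 r = p
      · have h2 : U.2 s ≠ q := (hcond.1 h1)
        have h3 : U.2 s ≠ p := h1 ▸ hkrs.symm
        rw [ha0 _ h3 h2]; ring
      · by_cases h1' : U.2 r = q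
        · have h2 : U.2 s ≠ p := (hcond.2 h1')
          have h3 : U.2 s ≠ q := h1' ▸ hkrs.symm
          rw [ha0 _ h2 h3]; ring
        · rw [ha0 _ h1 h1']; ring
  set cond : ((Fin (2*n) → ℤˣ) × (Fin (2*n) → Fin (2*n))) → Prop :=
    fun U => (U.2 r = p ∧ U.2 s = q ∨ U.2 r = q ∧ U.2 s = p) with hconddef
  -- compute the sum
  have hsum : ∑ U ∈ A, ⟪Uact n U a, EuclideanSpace.single r (1:ℝ)⟫ *
        ⟪Uact n U a, EuclideanSpace.single s (1:ℝ)⟫ =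
      ((A.filter (fun U => U.1 p * U.1 q = 1 ∧ cond U)).card : ℝ) * (2:ℝ)⁻¹
      - ((A.filter (fun U => U.1 p * U.1 q = -1 ∧ cond U)).card : ℝ) * (2:ℝ)⁻¹ := by
    rw [Finset.sum_congr rfl hval, ← Finset.sum_filter]
    rw [← Finset.sum_filter_add_sum_filter_not (A.filter cond)
        (fun U => U.1 p * U.1 q = 1)]
    have e1 : (A.filter cond).filter (fun U => U.1 p * U.1 q = 1) =
        A.filter (fun U => U.1 p * U.1 q = 1 ∧ cond U) := by
      rw [Finset.filter_comm, Finset.filter_filter]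
    have e2 : (A.filter cond).filter (fun U => ¬ (U.1 p * U.1 q = 1)) =
        A.filter (fun U => U.1 p * U.1 q = -1 ∧ cond U) := by
      rw [Finset.filter_comm, Finset.filter_filter]
      congr 1
      ext U
      constructor
      · rintro ⟨h, hc⟩
        refine ⟨?_, hc⟩
        rcases Int.units_eq_one_or (U.1 p * U.1 q) with h' | h'
        · exact absurd h' h
        · exact h'
      · rintro ⟨h, hc⟩
        refine ⟨?_, hc⟩
        intro h'
        rw [h] at h'
        exact absurd h' (by decide)
    rw [e1, e2]
    rw [Finset.sum_congr rfl (fun U hU => by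
      rw [Finset.mem_filter] at hU
      rw [hU.2.1]
      norm_num : ∀ U ∈ A.filter (fun U => U.1 p * U.1 q = 1 ∧ cond U),
        ((U.1 p * U.1 q : ℤˣ) : ℤ) * (2:ℝ)⁻¹ = (2:ℝ)⁻¹)]
    rw [Finset.sum_congr rfl (fun U hU => by
      rw [Finset.mem_filter] at hU
      rw [hU.2.1]
      norm_num : ∀ U ∈ A.filter (fun U => U.1 p * U.1 q = -1 ∧ cond U),
        ((U.1 p * U.1 q : ℤˣ) : ℤ) * (2:ℝ)⁻¹ = -(2:ℝ)⁻¹)]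
    rw [Finset.sum_const, Finset.sum_const]
    simp [mul_comm]
    ring
  have hS : ∑ U ∈ A, ⟪Uact n U a, EuclideanSpace.single r (1:ℝ)⟫ *
        ⟪Uact n U a, EuclideanSpace.single s (1:ℝ)⟫ ≠ 0 := by
    rw [hsum]
    intro h
    apply hcount
    have := sub_eq_zero.mp h
    have h2 : ((A.filter (fun U => U.1 p * U.1 q = 1 ∧ cond U)).card : ℝ) =
        ((A.filter (fun U => U.1 p * U.1 q = -1 ∧ cond U)).card : ℝ) := by
      field_simp at this
      exact_mod_cast this
    exact_mod_cast h2
  refine ⟨hS, ?_⟩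
  rintro ⟨C, hC, hframe⟩
  have hra : ⟪(EuclideanSpace.single r (1:ℝ) : EuclideanSpace ℝ (Fin (2*n))), a⟫ = 0 := by
    rw [EuclideanSpace.inner_single_left]
    rw [ha0 r (Ne.symm hpr) (Ne.symm hqr)]
    simp
  have heq := hframe (EuclideanSpace.single r (1:ℝ)) hra
  have heq2 := congrArg (fun v : EuclideanSpace ℝ (Fin (2*n)) =>
    ⟪v, EuclideanSpace.single s (1:ℝ)⟫) heq
  simp only [inner_smul_left, sum_inner, starRingEnd_apply, star_trivial] at heq2
  have hsum' : ∑ U ∈ A, ⟪(EuclideanSpace.single r (1:ℝ) : EuclideanSpace ℝ (Fin (2*n))),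
        Uact n U a⟫ * ⟪Uact n U a, EuclideanSpace.single s (1:ℝ)⟫ =
      ∑ U ∈ A, ⟪Uact n U a, EuclideanSpace.single r (1:ℝ)⟫ *
        ⟪Uact n U a, EuclideanSpace.single s (1:ℝ)⟫ :=
    Finset.sum_congr rfl fun U _ => by rw [real_inner_comm]
  rw [hsum'] at heq2
  rw [EuclideanSpace.inner_single_left] at heq2
  simp only [EuclideanSpace.single_apply, if_neg hrs, map_one, one_mul] at heq2
  rcases mul_eq_zero.mp heq2.symm with h | h
  · exact absurd h (inv_ne_zero (ne_of_gt hC))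
  · exact hS h
end

section
/- For every n >= 1, define the 2n x 2n matrix M by m_{i,j} = 0 if i = j; m_{i,j} = ((i+j-2) mod (2n-1)) + 1 if i != j and 1 <= i, j < 2n; m_{i,2n} = ((2i-2) mod (2n-1)) + 1 for 1 <= i < 2n; and m_{2n,j} = ((2j-2) mod (2n-1)) + 1 for 1 <= j < 2n. Then M is symmetric, has zero diagonal, and every row of M is a permutation of {0, 1, ..., 2n-1}. -/
open Finset

/-- The entry `m_{i,j}` (with 1-based indices `i, j ∈ {1,...,2n}`) of the matrix `M`. -/
def mEnt (n i j : ℕ) : ℕ :=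
  if i = j then 0
  else if i < 2*n ∧ j < 2*n then (i + j - 2) % (2*n - 1) + 1
  else if j = 2*n then (2*i - 2) % (2*n - 1) + 1
  else (2*j - 2) % (2*n - 1) + 1

theorem matrix_M_properties (n : ℕ) (hn : 1 ≤ n) :
    (∀ i ∈ Finset.Icc 1 (2*n), ∀ j ∈ Finset.Icc 1 (2*n), mEnt n i j = mEnt n j i) ∧
    (∀ i ∈ Finset.Icc 1 (2*n), mEnt n i i = 0) ∧
    (∀ i ∈ Finset.Icc 1 (2*n),
      (Finset.Icc 1 (2*n)).image (fun j => mEnt n i j) = Finset.range (2*n)) := by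
  have hm : 0 < 2*n - 1 := by omega
  set m := 2*n - 1 with hmdef
  refine ⟨?_, ?_, ?_⟩
  · intro i hi j hj
    simp only [Finset.mem_Icc] at hi hj
    unfold mEnt
    split_ifs <;> first | rfl | (exfalso; omega) | rw [Nat.add_comm i j]
  · intro i _
    simp [mEnt]
  · intro i hi
    simp only [Finset.mem_Icc] at hi
    apply Finset.Subset.antisymm
    · intro x hx
      simp only [Finset.mem_image, Finset.mem_Icc] at hx
      obtain ⟨j, hj, rfl⟩ := hx
      simp only [Finset.mem_range]
      have key : ∀ y : ℕ, y % m + 1 < 2*n := by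
        intro y
        have := Nat.mod_lt y hm
        omega
      unfold mEnt
      split_ifs <;> first | omega | exact key _
    · intro x hx
      simp only [Finset.mem_range] at hx
      simp only [Finset.mem_image, Finset.mem_Icc]
      rcases Nat.eq_zero_or_pos x with rfl | hxpos
      · exact ⟨i, ⟨hi.1, hi.2⟩, by simp [mEnt]⟩
      set r := x - 1 with hr
      have hrm : r < m := by omega
      rcases lt_or_ge i (2*n) with hi2 | hi2
      · -- i < 2n
        set a := i - 1 with ha
        have ham : a < m := by omega
        set b := (r + m - a) % m with hb
        have hbm : b < m := Nat.mod_lt _ hm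
        have hmain : (a + b) % m = r := by
          have h1 : (a + b) % m = (a + (r + m - a)) % m :=
            Nat.ModEq.add_left a (Nat.mod_modEq (r + m - a) m)
          have h2 : a + (r + m - a) = r + m := by omega
          rw [h1, h2, Nat.add_mod_right, Nat.mod_eq_of_lt hrm]
        rcases eq_or_ne (b + 1) i with hji | hji
        · -- use j = 2n
          refine ⟨2*n, ⟨by omega, le_refl _⟩, ?_⟩
          have : mEnt n i (2*n) = (2*i - 2) % m + 1 := by
            unfold mEnt
            rw [if_neg (by omega), if_neg (by omega), if_pos rfl]
          rw [this]
          have h2 : 2*i - 2 = a + a := by omega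
          have h3 : a = b := by omega
          rw [h3] at hmain
          rw [h2, h3, hmain]
          omega
        · refine ⟨b + 1, ⟨by omega, by omega⟩, ?_⟩
          have : mEnt n i (b+1) = (i + (b+1) - 2) % m + 1 := by
            unfold mEnt
            rw [if_neg (fun h => hji h.symm), if_pos ⟨hi2, by omega⟩]
          rw [this]
          have h2 : i + (b+1) - 2 = a + b := by omega
          rw [h2, hmain]
          omega
      · -- i = 2n
        have hi2n : i = 2*n := by omega
        set j := (r * n) % m + 1 with hjdef
        have hjm : (r * n) % m < m := Nat.mod_lt _ hm
        refine ⟨j, ⟨by omega, by omega⟩, ?_⟩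
        have hne : i ≠ j := by omega
        have : mEnt n i j = (2*j - 2) % m + 1 := by
          unfold mEnt
          rw [if_neg hne, if_neg (by omega), if_neg (by omega)]
        rw [this]
        have h2 : 2*j - 2 = 2 * ((r*n) % m) := by omega
        have h3 : (2 * ((r*n) % m)) % m = r := by
          have hc : (2 * ((r*n) % m)) % m = (2 * (r*n)) % m :=
            Nat.ModEq.mul_left 2 (Nat.mod_modEq _ m)
          have h4 : 2 * (r * n) = r + r * m := by
            have h5 : 2 * n = m + 1 := by omega
            calc 2 * (r * n) = r * (2 * n) := by ring
              _ = r * (m + 1) := by rw [h5]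
              _ = r + r * m := by ring
          rw [hc, h4, Nat.add_mul_mod_self_right, Nat.mod_eq_of_lt hrm]
        rw [h2, h3]
        omega
end

section
/- For every n >= 1, there exists a balanced subset A of A_{2n} with #A = (2n-1) * 2^{n-1}. Consequently, the sphere S^{2n-1} has a moving finite unit tight frame consisting of (2n-1) * 2^{n-1} vector fields. -/
open Finset RealInnerProductSpace

namespace BalAux

variable (N : ℕ)

def lastI : Fin (2*(N+1)) := ⟨2*N+1, by omega⟩

def emb (x : ZMod (2*N+1)) : Fin (2*(N+1)) := ⟨x.val, by have := ZMod.val_lt x; omega⟩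

def dm (i : Fin (2*(N+1))) : ZMod (2*N+1) := (i.val : ZMod (2*N+1))

def kf (t : ZMod (2*N+1)) (i : Fin (2*(N+1))) : Fin (2*(N+1)) :=
  if i = lastI N then emb N t else if dm N i = t then lastI N else emb N (2*t - dm N i)

def cc (c : Fin N → ℤˣ) (j : ℕ) : ℤˣ := if h : j - 1 < N then c ⟨j-1, h⟩ else 1

def sg (t : ZMod (2*N+1)) (c : Fin N → ℤˣ) (i : Fin (2*(N+1))) : ℤˣ :=
  if i = lastI N then 1 else if dm N i = t then -1
  else if (dm N i - t).val ≤ N then cc N c (dm N i - t).val else - cc N c (t - dm N i).val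

lemma emb_ne_last (x : ZMod (2*N+1)) : emb N x ≠ lastI N := by
  simp only [emb, lastI, Fin.mk.injEq, ne_eq]
  have := ZMod.val_lt x; omega

lemma dm_emb (x : ZMod (2*N+1)) : dm N (emb N x) = x := by
  simp only [dm, emb]
  rw [ZMod.natCast_val, ZMod.cast_id]

lemma val_lt_of_ne_last {i : Fin (2*(N+1))} (h : i ≠ lastI N) : i.val < 2*N+1 := by
  have h2 : i.val ≠ 2*N+1 := fun hc => h (Fin.ext hc)
  have := i.isLt; omega

lemma emb_dm {i : Fin (2*(N+1))} (h : i ≠ lastI N) : emb N (dm N i) = i := by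
  apply Fin.ext
  exact ZMod.val_cast_of_lt (val_lt_of_ne_last N h)

lemma emb_inj {x y : ZMod (2*N+1)} (h : emb N x = emb N y) : x = y := by
  have hv : (emb N x).val = (emb N y).val := by rw [h]
  exact ZMod.val_injective _ hv

lemma dm_inj {i j : Fin (2*(N+1))} (hi : i ≠ lastI N) (hj : j ≠ lastI N)
    (h : dm N i = dm N j) : i = j := by
  rw [← emb_dm N hi, ← emb_dm N hj, h]

lemma half_mul (x : ZMod (2*N+1)) : ((N:ZMod (2*N+1))+1) * (2*x) = x := by
  have h1 : ((2*(N+1) : ℕ) : ZMod (2*N+1)) = 1 := by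
    have : (2*(N+1) : ℕ) = (2*N+1) + 1 := by ring
    rw [this, Nat.cast_add, Nat.cast_one, ZMod.natCast_self, zero_add]
  calc ((N:ZMod (2*N+1))+1) * (2*x) = ((2*(N+1) : ℕ) : ZMod (2*N+1)) * x := by push_cast; ring
    _ = x := by rw [h1, one_mul]

lemma two_mul_inj {x y : ZMod (2*N+1)} (h : 2*x = 2*y) : x = y := by
  have := congrArg (fun z => ((N:ZMod (2*N+1))+1) * z) h
  simpa [half_mul] using this

lemma kf_invol (t : ZMod (2*N+1)) (i : Fin (2*(N+1))) : kf N t (kf N t i) = i := by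
  unfold kf
  by_cases h1 : i = lastI N
  · rw [if_pos h1, if_neg (emb_ne_last N t), dm_emb, if_pos rfl, h1]
  · by_cases h2 : dm N i = t
    · rw [if_neg h1, if_pos h2, if_pos rfl, ← h2, emb_dm N h1]
    · have e1 : emb N (2*t - dm N i) ≠ lastI N := emb_ne_last N _
      have e2 : dm N (emb N (2*t - dm N i)) = 2*t - dm N i := dm_emb N _
      have e3 : 2*t - dm N i ≠ t := fun hc => h2 (by linear_combination -hc)
      rw [if_neg h1, if_neg h2, if_neg e1, e2, if_neg e3]
      have h4 : 2*t - (2*t - dm N i) = dm N i := by ring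
      rw [h4, emb_dm N h1]

lemma neg_val'' {z : ZMod (2*N+1)} (h : z ≠ 0) : (-z).val = 2*N+1 - z.val := by
  rw [ZMod.neg_val, if_neg h]

lemma val_bnd {z : ZMod (2*N+1)} (h : z ≠ 0) : 1 ≤ z.val ∧ z.val ≤ 2*N := by
  have h1 : z.val ≠ 0 := fun hc => h ((ZMod.val_eq_zero z).mp hc)
  have h2 := ZMod.val_lt z
  omega

lemma sg_kf (t : ZMod (2*N+1)) (c : Fin N → ℤˣ) (i : Fin (2*(N+1))) :
    sg N t c (kf N t i) = - sg N t c i := by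
  unfold kf
  by_cases h1 : i = lastI N
  · rw [if_pos h1, h1]
    unfold sg
    rw [if_neg (emb_ne_last N t), if_pos (dm_emb N t), if_pos rfl]
  · by_cases h2 : dm N i = t
    · rw [if_neg h1, if_pos h2]
      unfold sg
      rw [if_pos rfl, if_neg h1, if_pos h2, neg_neg]
    · rw [if_neg h1, if_neg h2]
      unfold sg
      have e3 : 2*t - dm N i ≠ t := fun hc => h2 (by linear_combination -hc)
      rw [if_neg (emb_ne_last N _), if_neg h1, dm_emb N _, if_neg e3, if_neg h2]
      have r1 : 2*t - dm N i - t = -(dm N i - t) := by ring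
      have r2 : t - (2*t - dm N i) = dm N i - t := by ring
      have r3 : t - dm N i = -(dm N i - t) := by ring
      rw [r1, r2, r3]
      have hu : dm N i - t ≠ 0 := sub_ne_zero.mpr h2
      have nv : (-(dm N i - t)).val = 2*N+1 - (dm N i - t).val := neg_val'' N hu
      have bnd := val_bnd N hu
      by_cases hc : (dm N i - t).val ≤ N
      · rw [if_neg (by omega), if_pos hc]
      · rw [if_pos (by omega), if_neg hc, neg_neg]

def mk (tc : ZMod (2*N+1) × (Fin N → ℤˣ)) :
    (Fin (2*(N+1)) → ℤˣ) × (Fin (2*(N+1)) → Fin (2*(N+1))) :=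
  (sg N tc.1 tc.2, kf N tc.1)

def AA : Finset ((Fin (2*(N+1)) → ℤˣ) × (Fin (2*(N+1)) → Fin (2*(N+1)))) :=
  Finset.image (mk N) Finset.univ

lemma mk_adm (tc : ZMod (2*N+1) × (Fin N → ℤˣ)) :
    (∀ i, (mk N tc).1 i = - (mk N tc).1 ((mk N tc).2 i)) ∧
    (∀ i, (mk N tc).2 ((mk N tc).2 i) = i) := by
  refine ⟨fun i => ?_, fun i => kf_invol N tc.1 i⟩
  rw [show (mk N tc).1 = sg N tc.1 tc.2 from rfl, show (mk N tc).2 = kf N tc.1 from rfl,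
    sg_kf, neg_neg]

lemma sg_reads (t : ZMod (2*N+1)) (c : Fin N → ℤˣ) (j : Fin N) :
    sg N t c (emb N (t + ((j:ℕ)+1 : ℕ))) = c j := by
  have hlt : ((j:ℕ)+1 : ℕ) < 2*N+1 := by have := j.isLt; omega
  have hv : (((j:ℕ)+1 : ℕ) : ZMod (2*N+1)).val = (j:ℕ)+1 := ZMod.val_cast_of_lt hlt
  have hnz : (((j:ℕ)+1 : ℕ) : ZMod (2*N+1)) ≠ 0 := by
    intro hc; rw [hc] at hv; simp [ZMod.val_zero] at hv
  have h2 : dm N (emb N (t + ((j:ℕ)+1 : ℕ))) = t + ((j:ℕ)+1 : ℕ) := dm_emb N _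
  unfold sg
  rw [if_neg (emb_ne_last N _), h2]
  have h3 : t + (((j:ℕ)+1 : ℕ) : ZMod (2*N+1)) ≠ t := by
    intro hc; exact hnz (by linear_combination hc)
  rw [if_neg h3]
  have h4 : t + (((j:ℕ)+1 : ℕ) : ZMod (2*N+1)) - t = (((j:ℕ)+1 : ℕ) : ZMod (2*N+1)) := by ring
  rw [h4, hv, if_pos (by have := j.isLt; omega)]
  unfold cc
  rw [dif_pos (by have := j.isLt; omega : (j:ℕ)+1-1 < N)]
  exact congrArg c (Fin.ext (by simp))

lemma mk_inj : Function.Injective (mk N) := by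
  rintro ⟨t, c⟩ ⟨t', c'⟩ h
  have hk : kf N t = kf N t' := congrArg Prod.snd h
  have hs : sg N t c = sg N t' c' := congrArg Prod.fst h
  have ht : t = t' := by
    have := congrFun hk (lastI N)
    unfold kf at this
    rw [if_pos rfl, if_pos rfl] at this
    exact emb_inj N this
  subst ht
  have hc : c = c' := by
    funext j
    rw [← sg_reads N t c j, ← sg_reads N t c' j, hs]
  rw [hc]

lemma card_AA : (AA N).card = (2*N+1) * 2^N := by
  rw [AA, Finset.card_image_of_injective _ (mk_inj N), Finset.card_univ]
  rw [Fintype.card_prod, ZMod.card, Fintype.card_fun, Fintype.card_units_int,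
    Fintype.card_fin]

lemma t_unique {p q : Fin (2*(N+1))} (hpq : p ≠ q) : ∃ t₀, ∀ t, kf N t p = q ↔ t = t₀ := by
  by_cases hp : p = lastI N
  · subst hp
    refine ⟨dm N q, fun t => ?_⟩
    unfold kf
    rw [if_pos rfl]
    constructor
    · intro h; rw [← h, dm_emb]
    · intro h; rw [h, emb_dm N (Ne.symm hpq)]
  · by_cases hq : q = lastI N
    · subst hq
      refine ⟨dm N p, fun t => ?_⟩
      unfold kf
      rw [if_neg hp]
      constructor
      · intro h
        by_cases h2 : dm N p = t
        · exact h2.symm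
        · rw [if_neg h2] at h; exact absurd h (emb_ne_last N _)
      · intro h; rw [if_pos h.symm]
    · refine ⟨((N:ZMod (2*N+1))+1) * (dm N p + dm N q), fun t => ?_⟩
      unfold kf
      rw [if_neg hp]
      constructor
      · intro h
        by_cases h2 : dm N p = t
        · rw [if_pos h2] at h; exact absurd h.symm hq
        · rw [if_neg h2] at h
          have h3 : 2*t - dm N p = dm N q := by
            have := congrArg (dm N) h
            rwa [dm_emb] at this
          have h4 : 2*t = dm N p + dm N q := by linear_combination h3
          calc t = ((N:ZMod (2*N+1))+1) * (2*t) := (half_mul N t).symm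
            _ = ((N:ZMod (2*N+1))+1) * (dm N p + dm N q) := by rw [h4]
      · intro h
        subst h
        have key : 2*(((N:ZMod (2*N+1))+1) * (dm N p + dm N q)) = dm N p + dm N q := by
          have := half_mul N (dm N p + dm N q)
          linear_combination this
        have h2 : dm N p ≠ ((N:ZMod (2*N+1))+1) * (dm N p + dm N q) := by
          intro hc
          have : 2 * dm N p = dm N p + dm N q := by conv_lhs => rw [hc, key]
          have hdm : dm N p = dm N q := by linear_combination this
          exact hpq (dm_inj N hp hq hdm)
        rw [if_neg h2]
        have h3 : 2*(((N:ZMod (2*N+1))+1) * (dm N p + dm N q)) - dm N p = dm N q := by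
          rw [key]; ring
        rw [h3, emb_dm N hq]

lemma count_t {p q : Fin (2*(N+1))} (hpq : p ≠ q) :
    (Finset.univ.filter (fun t => kf N t p = q)).card = 1 := by
  obtain ⟨t₀, ht⟩ := t_unique N hpq
  have : Finset.univ.filter (fun t => kf N t p = q) = {t₀} := by
    ext t; simp [ht t]
  rw [this, Finset.card_singleton]

lemma filter_AA (P : ((Fin (2*(N+1)) → ℤˣ) × (Fin (2*(N+1)) → Fin (2*(N+1)))) → Prop)
    [DecidablePred P] :
    ((AA N).filter P).card = (Finset.univ.filter (fun tc => P (mk N tc))).card := by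
  rw [AA, Finset.filter_image, Finset.card_image_of_injective _ (mk_inj N)]

lemma count_k {p q : Fin (2*(N+1))} (hpq : p ≠ q) :
    ((AA N).filter (fun U => U.2 p = q)).card = 2^N := by
  rw [filter_AA]
  have h1 : (Finset.univ.filter (fun tc : ZMod (2*N+1) × (Fin N → ℤˣ) =>
      (mk N tc).2 p = q)) = (Finset.univ.filter (fun t => kf N t p = q)) ×ˢ Finset.univ := by
    ext ⟨t, c⟩
    rw [Finset.mem_filter, Finset.mem_product, Finset.mem_filter]
    simp [mk]
  rw [h1, Finset.card_product, count_t N hpq, one_mul, Finset.card_univ,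
    Fintype.card_fun, Fintype.card_units_int, Fintype.card_fin]

def flipC (J : ℕ) (c : Fin N → ℤˣ) : Fin N → ℤˣ := fun j => if (j:ℕ) = J then -c j else c j

def minJ (t : ZMod (2*N+1)) (v : Fin (2*(N+1))) : ℕ :=
  min (dm N v - t).val (t - dm N v).val - 1

lemma flipC_invol (J : ℕ) (c : Fin N → ℤˣ) : flipC N J (flipC N J c) = c := by
  funext j; unfold flipC; by_cases h : (j:ℕ) = J <;> simp [h]

lemma cc_flip (J : ℕ) (c : Fin N → ℤˣ) (j : ℕ) :
    cc N (flipC N J c) j = if j - 1 = J ∧ j - 1 < N then -cc N c j else cc N c j := by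
  unfold cc flipC
  by_cases h : j - 1 < N
  · rw [dif_pos h, dif_pos h]
    by_cases hJ : j - 1 = J
    · rw [if_pos hJ, if_pos ⟨hJ, h⟩]
    · rw [if_neg hJ, if_neg (fun hh => hJ hh.1)]
  · rw [dif_neg h, dif_neg h, if_neg (fun hh => h hh.2)]

lemma sg_flip_aux (t : ZMod (2*N+1)) (c : Fin N → ℤˣ) (J : ℕ) {v : Fin (2*(N+1))}
    (h1 : v ≠ lastI N) (h2 : dm N v ≠ t) :
    sg N t (flipC N J c) v = if minJ N t v = J then - sg N t c v else sg N t c v := by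
  have hu : dm N v - t ≠ 0 := sub_ne_zero.mpr h2
  have bnd := val_bnd N hu
  have hneg : t - dm N v = -(dm N v - t) := by ring
  have nv : (-(dm N v - t)).val = 2*N+1 - (dm N v - t).val := neg_val'' N hu
  unfold sg minJ
  rw [if_neg h1, if_neg h2, if_neg h1, if_neg h2, hneg, nv]
  set a := (dm N v - t).val with ha
  by_cases hc : a ≤ N
  · rw [if_pos hc, if_pos hc, cc_flip]
    have hmin : min a (2*N+1-a) = a := by omega
    rw [hmin]
    by_cases hJ : a - 1 = J
    · rw [if_pos ⟨hJ, by omega⟩, if_pos hJ]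
    · rw [if_neg (fun hh => hJ hh.1), if_neg hJ]
  · rw [if_neg hc, if_neg hc, cc_flip]
    have hmin : min a (2*N+1-a) = 2*N+1-a := by omega
    rw [hmin]
    by_cases hJ : 2*N+1-a-1 = J
    · rw [if_pos ⟨hJ, by omega⟩, if_pos hJ, neg_neg]
    · rw [if_neg (fun hh => hJ hh.1), if_neg hJ]

lemma sg_flip_last (t : ZMod (2*N+1)) (c : Fin N → ℤˣ) (J : ℕ) {v : Fin (2*(N+1))}
    (h : v = lastI N ∨ dm N v = t) :
    sg N t (flipC N J c) v = sg N t c v := by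
  unfold sg
  rcases h with h | h
  · rw [if_pos h, if_pos h]
  · by_cases h1 : v = lastI N
    · rw [if_pos h1, if_pos h1]
    · rw [if_neg h1, if_neg h1, if_pos h, if_pos h]

lemma minJ_coll {t : ZMod (2*N+1)} {p q : Fin (2*(N+1))} (hp1 : p ≠ lastI N)
    (hp2 : dm N p ≠ t) (hq1 : q ≠ lastI N) (hq2 : dm N q ≠ t)
    (h : minJ N t p = minJ N t q) : p = q ∨ kf N t p = q := by
  have hup : dm N p - t ≠ 0 := sub_ne_zero.mpr hp2
  have huq : dm N q - t ≠ 0 := sub_ne_zero.mpr hq2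
  have bp := val_bnd N hup
  have bq := val_bnd N huq
  have hnp : t - dm N p = -(dm N p - t) := by ring
  have hnq : t - dm N q = -(dm N q - t) := by ring
  have nvp : (-(dm N p - t)).val = 2*N+1 - (dm N p - t).val := neg_val'' N hup
  have nvq : (-(dm N q - t)).val = 2*N+1 - (dm N q - t).val := neg_val'' N huq
  unfold minJ at h
  rw [hnp, hnq, nvp, nvq] at h
  set a := (dm N p - t).val with ha
  set b := (dm N q - t).val with hb
  have hcase : a = b ∨ a = 2*N+1 - b := by omega
  rcases hcase with hc | hc
  · left
    have : dm N p - t = dm N q - t := ZMod.val_injective _ hc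
    have hdm : dm N p = dm N q := by linear_combination this
    exact dm_inj N hp1 hq1 hdm
  · right
    have hval : a = (-(dm N q - t)).val := by rw [nvq]; omega
    have heq : dm N p - t = -(dm N q - t) := ZMod.val_injective _ hval
    have h2t : 2*t - dm N p = dm N q := by linear_combination -heq
    unfold kf
    rw [if_neg hp1, if_neg hp2, h2t, emb_dm N hq1]

lemma kf_inj (t : ZMod (2*N+1)) : Function.Injective (kf N t) := by
  intro i j h
  have := congrArg (kf N t) h
  rwa [kf_invol, kf_invol] at this

lemma flip_prod {t : ZMod (2*N+1)} (c : Fin N → ℤˣ) {p q r s : Fin (2*(N+1))}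
    (hpq : p ≠ q) (hpr : p ≠ r) (hps : p ≠ s) (hqr : q ≠ r) (hqs : q ≠ s)
    (hE : (kf N t r = p ∧ kf N t s = q) ∨ (kf N t r = q ∧ kf N t s = p)) :
    sg N t (flipC N (if q ≠ lastI N ∧ dm N q ≠ t then minJ N t q else minJ N t p) c) p *
      sg N t (flipC N (if q ≠ lastI N ∧ dm N q ≠ t then minJ N t q else minJ N t p) c) q
    = -(sg N t c p * sg N t c q) := by
  have hknot : kf N t p ≠ q := by
    intro hc
    rcases hE with ⟨h1, h2⟩ | ⟨h1, h2⟩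
    · exact hps (kf_inj N t (hc.symm ▸ h2) ).symm
    · exact hpr (kf_inj N t (hc.symm ▸ h1)).symm
  have hknotq : kf N t q ≠ p := by
    intro hc
    apply hknot
    rw [← hc, kf_invol]
  by_cases hqf : q ≠ lastI N ∧ dm N q ≠ t
  · rw [if_pos hqf]
    have hq' : sg N t (flipC N (minJ N t q) c) q = - sg N t c q := by
      rw [sg_flip_aux N t c _ hqf.1 hqf.2, if_pos rfl]
    have hp' : sg N t (flipC N (minJ N t q) c) p = sg N t c p := by
      by_cases hpf : p = lastI N ∨ dm N p = t
      · exact sg_flip_last N t c _ hpf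
      · push_neg at hpf
        rw [sg_flip_aux N t c _ hpf.1 hpf.2]
        rw [if_neg]
        intro hc
        rcases minJ_coll N hpf.1 hpf.2 hqf.1 hqf.2 hc with h | h
        · exact hpq h
        · exact hknot h
    rw [hp', hq', mul_neg]
  · rw [if_neg hqf]
    push_neg at hqf
    have hql : q = lastI N ∨ dm N q = t := by
      by_cases h : q = lastI N
      · exact Or.inl h
      · exact Or.inr (hqf h)
    have hpl : p ≠ lastI N := by
      intro hc
      have hqlast : q ≠ lastI N := fun hq => hpq (hc.trans hq.symm)
      have hqt : dm N q = t := hqf hqlast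
      apply hknotq
      unfold kf
      rw [if_neg hqlast, if_pos hqt, ← hc]
    have hpt : dm N p ≠ t := by
      intro hc
      by_cases hql2 : q = lastI N
      · apply hknot
        unfold kf
        rw [if_neg hpl, if_pos hc, ← hql2]
      · have hqt : dm N q = t := hqf hql2
        exact hpq (dm_inj N hpl hql2 (hc.trans hqt.symm))
    have hp' : sg N t (flipC N (minJ N t p) c) p = - sg N t c p := by
      rw [sg_flip_aux N t c _ hpl hpt, if_pos rfl]
    have hq' : sg N t (flipC N (minJ N t p) c) q = sg N t c q :=
      sg_flip_last N t c _ hql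
    rw [hp', hq', neg_mul]

lemma balance2 {p q r s : Fin (2*(N+1))} (hpq : p ≠ q) (hpr : p ≠ r) (hps : p ≠ s)
    (hqr : q ≠ r) (hqs : q ≠ s) :
    ((AA N).filter (fun U => U.1 p * U.1 q = -1 ∧
        (U.2 r = p ∧ U.2 s = q ∨ U.2 r = q ∧ U.2 s = p))).card =
    ((AA N).filter (fun U => U.1 p * U.1 q = 1 ∧
        (U.2 r = p ∧ U.2 s = q ∨ U.2 r = q ∧ U.2 s = p))).card := by
  rw [filter_AA, filter_AA]
  set Φ : ZMod (2*N+1) × (Fin N → ℤˣ) → ZMod (2*N+1) × (Fin N → ℤˣ) :=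
    fun tc => (tc.1, flipC N
      (if q ≠ lastI N ∧ dm N q ≠ tc.1 then minJ N tc.1 q else minJ N tc.1 p) tc.2) with hΦ
  have hΦΦ : ∀ tc, Φ (Φ tc) = tc := by
    rintro ⟨t, c⟩
    simp only [hΦ, flipC_invol]
  have hmem : ∀ (tc : ZMod (2*N+1) × (Fin N → ℤˣ)) (v : ℤˣ),
      (sg N tc.1 tc.2 p * sg N tc.1 tc.2 q = v ∧
        (kf N tc.1 r = p ∧ kf N tc.1 s = q ∨ kf N tc.1 r = q ∧ kf N tc.1 s = p)) →
      (sg N (Φ tc).1 (Φ tc).2 p * sg N (Φ tc).1 (Φ tc).2 q = -v ∧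
        (kf N (Φ tc).1 r = p ∧ kf N (Φ tc).1 s = q ∨
          kf N (Φ tc).1 r = q ∧ kf N (Φ tc).1 s = p)) := by
    rintro ⟨t, c⟩ v ⟨h1, h2⟩
    refine ⟨?_, h2⟩
    have := flip_prod N c hpq hpr hps hqr hqs h2
    simp only [hΦ] at *
    rw [this, h1]
  apply Finset.card_nbij' Φ Φ
  · intro tc htc
    rw [Finset.mem_coe, Finset.mem_filter] at htc ⊢
    simp only [Finset.mem_coe, Finset.mem_filter, Finset.mem_univ, true_and, mk] at htc ⊢
    have := hmem tc (-1) htc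
    rwa [neg_neg] at this
  · intro tc htc
    rw [Finset.mem_coe, Finset.mem_filter] at htc ⊢
    simp only [Finset.mem_coe, Finset.mem_filter, Finset.mem_univ, true_and, mk] at htc ⊢
    exact hmem tc 1 htc
  · intro tc _; exact hΦΦ tc
  · intro tc _; exact hΦΦ tc

lemma mem_adm {U : (Fin (2*(N+1)) → ℤˣ) × (Fin (2*(N+1)) → Fin (2*(N+1)))} (hU : U ∈ AA N) :
    (∀ i, U.1 i = - U.1 (U.2 i)) ∧ (∀ i, U.2 (U.2 i) = i) := by
  obtain ⟨tc, -, rfl⟩ := Finset.mem_image.mp hU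
  exact mk_adm N tc

lemma k_ne {U : (Fin (2*(N+1)) → ℤˣ) × (Fin (2*(N+1)) → Fin (2*(N+1)))} (hU : U ∈ AA N)
    (i : Fin (2*(N+1))) : U.2 i ≠ i := by
  intro hc
  have h1 := (mem_adm N hU).1 i
  rw [hc] at h1
  rcases Int.units_eq_one_or (U.1 i) with h | h <;> rw [h] at h1 <;> exact absurd h1 (by decide)

lemma k_flip {U : (Fin (2*(N+1)) → ℤˣ) × (Fin (2*(N+1)) → Fin (2*(N+1)))} (hU : U ∈ AA N)
    {i j : Fin (2*(N+1))} (h : U.2 i = j) : U.2 j = i := by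
  rw [← h]; exact (mem_adm N hU).2 i

lemma count_k_self (i : Fin (2*(N+1))) :
    (AA N).filter (fun U => U.2 i = i) = ∅ := by
  rw [Finset.filter_eq_empty_iff]
  intro U hU
  exact k_ne N hU i

lemma fiber_empty {p q i j : Fin (2*(N+1))} (hij : j ≠ i)
    (h : p = i ∨ p = j ∨ q = i ∨ q = j ∨ p = q) (hnot : (p, q) ≠ (i, j)) :
    (AA N).filter (fun U => (U.2 j, U.2 i) = (p, q)) = ∅ := by
  rw [Finset.filter_eq_empty_iff]
  intro U hU hc
  rw [Prod.mk.injEq] at hc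
  obtain ⟨h1, h2⟩ := hc
  rcases h with h | h | h | h | h
  · subst h
    have hf := k_flip N hU h1
    exact hnot (by rw [Prod.mk.injEq]; exact ⟨rfl, by rw [← h2, hf]⟩)
  · subst h
    exact k_ne N hU _ h1
  · subst h
    exact k_ne N hU _ h2
  · subst h
    have hf := k_flip N hU h2
    exact hnot (by rw [Prod.mk.injEq]; exact ⟨by rw [← h1, hf], rfl⟩)
  · subst h
    have hf1 := k_flip N hU h1
    have hf2 := k_flip N hU h2
    exact hij (by rw [← hf1, hf2])

lemma Wval (a : Fin (2*(N+1)) → ℝ) (hsq : ∑ q, a q * a q = 1) (j i : Fin (2*(N+1))) :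
    ∑ U ∈ AA N, (((U.1 (U.2 j) : ℤ) : ℝ) * a (U.2 j)) * (((U.1 (U.2 i) : ℤ) : ℝ) * a (U.2 i))
    = 2^N * ((if j = i then 1 else 0) - a j * a i) := by
  by_cases hji : j = i
  · subst hji
    rw [if_pos rfl]
    have hterm : ∀ U ∈ AA N,
        (((U.1 (U.2 j) : ℤ) : ℝ) * a (U.2 j)) * (((U.1 (U.2 j) : ℤ) : ℝ) * a (U.2 j))
        = a (U.2 j) * a (U.2 j) := by
      intro U hU
      have h1 : ((U.1 (U.2 j) : ℤ) : ℝ) * ((U.1 (U.2 j) : ℤ) : ℝ) = 1 := by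
        have h2 := Int.units_mul_self (U.1 (U.2 j))
        have h3 := congrArg (fun u : ℤˣ => ((u : ℤ) : ℝ)) h2
        push_cast at h3
        simpa using h3
      calc (((U.1 (U.2 j) : ℤ) : ℝ) * a (U.2 j)) * (((U.1 (U.2 j) : ℤ) : ℝ) * a (U.2 j))
          = (((U.1 (U.2 j) : ℤ) : ℝ) * ((U.1 (U.2 j) : ℤ) : ℝ)) * (a (U.2 j) * a (U.2 j)) := by
            ring
        _ = a (U.2 j) * a (U.2 j) := by rw [h1, one_mul]
    rw [Finset.sum_congr rfl hterm,
      ← Finset.sum_fiberwise (AA N) (fun U => U.2 j) (fun U => a (U.2 j) * a (U.2 j))]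
    have inner : ∀ q : Fin (2*(N+1)),
        (∑ U ∈ (AA N).filter (fun U => U.2 j = q), a (U.2 j) * a (U.2 j))
        = (if q = j then 0 else (2^N : ℝ)) * (a q * a q) := by
      intro q
      have hc : ∀ U ∈ (AA N).filter (fun U => U.2 j = q),
          a (U.2 j) * a (U.2 j) = a q * a q := by
        intro U hU
        rw [(Finset.mem_filter.mp hU).2]
      rw [Finset.sum_congr rfl hc, Finset.sum_const, nsmul_eq_mul]
      by_cases hq : q = j
      · subst hq
        rw [count_k_self, if_pos rfl]
        simp
      · rw [count_k N (Ne.symm hq), if_neg hq]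
        push_cast
        ring
    rw [Finset.sum_congr rfl (fun q _ => inner q)]
    have hsplit : ∀ q : Fin (2*(N+1)),
        (if q = j then (0:ℝ) else (2^N : ℝ)) * (a q * a q)
        = (2^N : ℝ) * (a q * a q) - (if q = j then (2^N : ℝ) * (a q * a q) else 0) := by
      intro q; split_ifs <;> ring
    rw [Finset.sum_congr rfl (fun q _ => hsplit q), Finset.sum_sub_distrib]
    rw [← Finset.mul_sum, hsq]
    simp only [Finset.sum_ite_eq', Finset.mem_univ, if_pos]
    ring
  · rw [if_neg hji]
    have hij : j ≠ i := hji
    rw [← Finset.sum_fiberwise (AA N) (fun U => (U.2 j, U.2 i))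
      (fun U => (((U.1 (U.2 j) : ℤ) : ℝ) * a (U.2 j)) * (((U.1 (U.2 i) : ℤ) : ℝ) * a (U.2 i)))]
    set T : Fin (2*(N+1)) × Fin (2*(N+1)) → ℝ := fun pq =>
      ∑ U ∈ (AA N).filter (fun U => (U.2 j, U.2 i) = pq),
        (((U.1 (U.2 j) : ℤ) : ℝ) * a (U.2 j)) * (((U.1 (U.2 i) : ℤ) : ℝ) * a (U.2 i)) with hT
    have hTzero : ∀ p q : Fin (2*(N+1)), (p = i ∨ p = j ∨ q = i ∨ q = j ∨ p = q) →
        (p,q) ≠ (i,j) → T (p,q) = 0 := by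
      intro p q h hnot
      rw [hT]
      simp only []
      rw [fiber_empty N hij h hnot, Finset.sum_empty]
    have hTmain : ∀ p q : Fin (2*(N+1)), p ≠ i → p ≠ j → q ≠ i → q ≠ j → p ≠ q →
        T (p,q) + T (q,p) = 0 := by
      intro p q hpi hpj hqi hqj hpq
      have h1 : T (p, q) = (∑ U ∈ (AA N).filter (fun U => (U.2 j, U.2 i) = (p,q)),
          (((U.1 p : ℤ) : ℝ) * ((U.1 q : ℤ) : ℝ))) * (a p * a q) := by
        rw [hT]
        simp only []
        rw [Finset.sum_mul]
        apply Finset.sum_congr rfl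
        intro U hU
        have hm := (Finset.mem_filter.mp hU).2
        rw [Prod.mk.injEq] at hm
        rw [hm.1, hm.2]; ring
      have h2 : T (q, p) = (∑ U ∈ (AA N).filter (fun U => (U.2 j, U.2 i) = (q,p)),
          (((U.1 p : ℤ) : ℝ) * ((U.1 q : ℤ) : ℝ))) * (a p * a q) := by
        rw [hT]
        simp only []
        rw [Finset.sum_mul]
        apply Finset.sum_congr rfl
        intro U hU
        have hm := (Finset.mem_filter.mp hU).2
        rw [Prod.mk.injEq] at hm
        rw [hm.1, hm.2]; ring
      rw [h1, h2, ← add_mul]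
      have hdisj : Disjoint ((AA N).filter (fun U => (U.2 j, U.2 i) = (p,q)))
          ((AA N).filter (fun U => (U.2 j, U.2 i) = (q,p))) := by
        rw [Finset.disjoint_left]
        intro U hU1 hU2
        have hm1 := (Finset.mem_filter.mp hU1).2
        have hm2 := (Finset.mem_filter.mp hU2).2
        rw [Prod.mk.injEq] at hm1 hm2
        exact hpq (hm1.1.symm.trans hm2.1)
      rw [← Finset.sum_union hdisj]
      have hunion : ((AA N).filter (fun U => (U.2 j, U.2 i) = (p,q))) ∪
          ((AA N).filter (fun U => (U.2 j, U.2 i) = (q,p))) =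
          (AA N).filter (fun U => (U.2 j = p ∧ U.2 i = q) ∨ (U.2 j = q ∧ U.2 i = p)) := by
        rw [← Finset.filter_or]
        apply Finset.filter_congr
        intro U _
        rw [Prod.mk.injEq, Prod.mk.injEq]
      rw [hunion]
      have hzero : (∑ U ∈ (AA N).filter
          (fun U => (U.2 j = p ∧ U.2 i = q) ∨ (U.2 j = q ∧ U.2 i = p)),
          (((U.1 p : ℤ) : ℝ) * ((U.1 q : ℤ) : ℝ))) = 0 := by
        rw [← Finset.sum_filter_add_sum_filter_not _ (fun U => U.1 p * U.1 q = 1)]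
        have hA : ∀ U ∈ ((AA N).filter
            (fun U => (U.2 j = p ∧ U.2 i = q) ∨ (U.2 j = q ∧ U.2 i = p))).filter
            (fun U => U.1 p * U.1 q = 1),
            ((U.1 p : ℤ) : ℝ) * ((U.1 q : ℤ) : ℝ) = 1 := by
          intro U hU
          have h := (Finset.mem_filter.mp hU).2
          have h' := congrArg (fun u : ℤˣ => ((u : ℤ) : ℝ)) h
          push_cast at h'
          simpa using h'
        have hB : ∀ U ∈ ((AA N).filter
            (fun U => (U.2 j = p ∧ U.2 i = q) ∨ (U.2 j = q ∧ U.2 i = p))).filter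
            (fun U => ¬(U.1 p * U.1 q = 1)),
            ((U.1 p : ℤ) : ℝ) * ((U.1 q : ℤ) : ℝ) = -1 := by
          intro U hU
          have h := (Finset.mem_filter.mp hU).2
          have hv := (Int.units_eq_one_or (U.1 p * U.1 q)).resolve_left h
          have h' := congrArg (fun u : ℤˣ => ((u : ℤ) : ℝ)) hv
          push_cast at h'
          simpa using h'
        rw [Finset.sum_congr rfl hA, Finset.sum_congr rfl hB, Finset.sum_const,
          Finset.sum_const, nsmul_eq_mul, nsmul_eq_mul]
        have e1 : ((AA N).filter
            (fun U => (U.2 j = p ∧ U.2 i = q) ∨ (U.2 j = q ∧ U.2 i = p))).filter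
            (fun U => U.1 p * U.1 q = 1) =
            (AA N).filter (fun U => U.1 p * U.1 q = 1 ∧
              (U.2 j = p ∧ U.2 i = q ∨ U.2 j = q ∧ U.2 i = p)) := by
          rw [Finset.filter_filter]
          apply Finset.filter_congr
          intro U _
          exact and_comm
        have e2 : ((AA N).filter
            (fun U => (U.2 j = p ∧ U.2 i = q) ∨ (U.2 j = q ∧ U.2 i = p))).filter
            (fun U => ¬(U.1 p * U.1 q = 1)) =
            (AA N).filter (fun U => U.1 p * U.1 q = -1 ∧
              (U.2 j = p ∧ U.2 i = q ∨ U.2 j = q ∧ U.2 i = p)) := by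
          rw [Finset.filter_filter]
          apply Finset.filter_congr
          intro U _
          constructor
          · rintro ⟨hE, hne⟩
            exact ⟨(Int.units_eq_one_or _).resolve_left hne, hE⟩
          · rintro ⟨hv, hE⟩
            refine ⟨hE, ?_⟩
            rw [hv]; decide
        rw [e1, e2, balance2 N hpq hpj hpi hqj hqi]
        ring
      rw [hzero, zero_mul]
    have hsub : ({((i,j) : Fin (2*(N+1)) × Fin (2*(N+1))), (j,i)} : Finset _) ⊆ Finset.univ :=
      Finset.subset_univ _
    rw [← Finset.sum_sdiff hsub]
    have hrest : ∑ pq ∈ Finset.univ \ {((i,j) : Fin (2*(N+1)) × Fin (2*(N+1))), (j,i)}, T pq = 0 := by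
      apply Finset.sum_involution (fun pq _ => (pq.2, pq.1))
      · rintro ⟨p, q⟩ ha
        simp only [Finset.mem_sdiff, Finset.mem_univ, true_and, Finset.mem_insert,
          Finset.mem_singleton, not_or] at ha
        obtain ⟨hne1, hne2⟩ := ha
        by_cases hdeg : p = i ∨ p = j ∨ q = i ∨ q = j ∨ p = q
        · have hz1 : T (p, q) = 0 := hTzero p q hdeg hne1
          have hz2 : T (q, p) = 0 := by
            apply hTzero q p (by tauto)
            intro hc
            rw [Prod.mk.injEq] at hc
            exact hne2 (by rw [Prod.mk.injEq]; exact ⟨hc.2, hc.1⟩)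
          rw [hz1, hz2, add_zero]
        · push_neg at hdeg
          obtain ⟨hpi, hpj, hqi, hqj, hpq⟩ := hdeg
          exact hTmain p q hpi hpj hqi hqj hpq
      · rintro ⟨p, q⟩ ha hne
        simp only [Finset.mem_sdiff, Finset.mem_univ, true_and, Finset.mem_insert,
          Finset.mem_singleton, not_or] at ha
        intro hc
        rw [Prod.mk.injEq] at hc
        apply hne
        apply hTzero p q (Or.inr (Or.inr (Or.inr (Or.inr hc.1.symm)))) ha.1
      · rintro ⟨p, q⟩ ha
        simp only [Finset.mem_sdiff, Finset.mem_univ, true_and, Finset.mem_insert,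
          Finset.mem_singleton, not_or] at ha ⊢
        constructor
        · intro hc
          rw [Prod.mk.injEq] at hc
          exact ha.2 (by rw [Prod.mk.injEq]; exact ⟨hc.2, hc.1⟩)
        · intro hc
          rw [Prod.mk.injEq] at hc
          exact ha.1 (by rw [Prod.mk.injEq]; exact ⟨hc.2, hc.1⟩)
      · rintro ⟨p, q⟩ ha
        rfl
    rw [hrest, zero_add]
    have hne : ((i,j) : Fin (2*(N+1)) × Fin (2*(N+1))) ≠ (j,i) := by
      intro hc
      exact hij (congrArg Prod.snd hc)
    rw [Finset.sum_pair hne]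
    have hz : T (j, i) = 0 := by
      apply hTzero j i (Or.inr (Or.inl rfl))
      intro hc
      exact hij (congrArg Prod.fst hc)
    have hv : T (i, j) = 2^N * (-(a j * a i)) := by
      rw [hT]
      simp only []
      have hF : (AA N).filter (fun U => ((U.2 j, U.2 i) : _ × _) = (i,j)) =
          (AA N).filter (fun U => U.2 i = j) := by
        apply Finset.filter_congr
        intro U hU
        rw [Prod.mk.injEq]
        constructor
        · rintro ⟨h1, h2⟩; exact h2
        · intro h2; exact ⟨k_flip N hU h2, h2⟩
      rw [hF]
      have hterm : ∀ U ∈ (AA N).filter (fun U => U.2 i = j),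
          (((U.1 (U.2 j) : ℤ) : ℝ) * a (U.2 j)) * (((U.1 (U.2 i) : ℤ) : ℝ) * a (U.2 i))
          = -(a j * a i) := by
        intro U hU
        have hUA := (Finset.mem_filter.mp hU).1
        have h2 : U.2 i = j := (Finset.mem_filter.mp hU).2
        have h1 : U.2 j = i := k_flip N hUA h2
        have heps : U.1 i = - U.1 j := by
          have := (mem_adm N hUA).1 i
          rwa [h2] at this
        have hsq' : ((U.1 j : ℤ) : ℝ) * ((U.1 j : ℤ) : ℝ) = 1 := by
          have h2' := Int.units_mul_self (U.1 j)
          have h3 := congrArg (fun u : ℤˣ => ((u : ℤ) : ℝ)) h2'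
          push_cast at h3
          simpa using h3
        rw [h1, h2, heps]
        push_cast
        calc (-((U.1 j : ℤ) : ℝ) * a i) * (((U.1 j : ℤ) : ℝ) * a j)
            = -((((U.1 j : ℤ) : ℝ) * ((U.1 j : ℤ) : ℝ)) * (a j * a i)) := by ring
          _ = -(a j * a i) := by rw [hsq']; ring
      rw [Finset.sum_congr rfl hterm, Finset.sum_const, nsmul_eq_mul,
        count_k N (Ne.symm hij)]
      push_cast
      ring
    show T (i, j) + T (j, i) = 2^N * (0 - a j * a i)
    rw [hz, hv]
    ring

end BalAux

open Finset in
theorem exists_small_balanced_set (n : ℕ) (hn : 1 ≤ n) :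
    ∃ A : Finset ((Fin (2*n) → ℤˣ) × (Fin (2*n) → Fin (2*n))),
      (∀ U ∈ A, Adm n U) ∧
      IsBalanced n A ∧
      A.card = (2*n - 1) * 2^(n-1) ∧
      (∀ U ∈ A, Continuous (fun a : EuclideanSpace ℝ (Fin (2*n)) => Uact n U a)) ∧
      (∀ a : EuclideanSpace ℝ (Fin (2*n)), ‖a‖ = 1 →
        (∀ U ∈ A, ‖Uact n U a‖ = 1 ∧ ⟪Uact n U a, a⟫ = 0) ∧
        (∀ x : EuclideanSpace ℝ (Fin (2*n)), ⟪x, a⟫ = 0 →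
          x = ((2*(n:ℝ) - 1) / A.card) • ∑ U ∈ A, ⟪x, Uact n U a⟫ • Uact n U a)) := by
  obtain ⟨N, rfl⟩ : ∃ N, n = N + 1 := ⟨n - 1, by omega⟩
  refine ⟨BalAux.AA N, ?_, ⟨?_, ?_⟩, ?_, ?_, ?_⟩
  · intro U hU
    exact BalAux.mem_adm N hU
  · intro p q hpq
    rw [BalAux.count_k N hpq, BalAux.card_AA]
    have h1 : 2*((N:ℝ)+1) - 1 = 2*(N:ℝ)+1 := by ring
    push_cast
    rw [h1, mul_comm, mul_div_assoc, div_self (by positivity), mul_one]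
  · intro p q r s h1 h2 h3 h4 h5 h6
    exact BalAux.balance2 N h1 h2 h3 h4 h5
  · rw [BalAux.card_AA, Nat.add_sub_cancel]
    congr 1
  · intro U hU
    exact (PiLp.continuous_toLp _ _).comp
      (continuous_pi fun i => continuous_const.mul (PiLp.continuous_apply _ _ (U.2 i)))
  · intro a ha
    have hsq : ∑ q, a q * a q = 1 := by
      have h0 : ⟪a, a⟫ = (1:ℝ) := by
        rw [real_inner_self_eq_norm_sq, ha]; norm_num
      rw [PiLp.inner_apply] at h0
      simpa [RCLike.inner_apply, ← sq] using h0
    constructor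
    · intro U hU
      obtain ⟨hU1, hU2⟩ := BalAux.mem_adm N hU
      have hinv : Function.Involutive U.2 := hU2
      have epsq : ∀ v : Fin (2*(N+1)), ((U.1 v : ℤ) : ℝ) * ((U.1 v : ℤ) : ℝ) = 1 := by
        intro v
        have h2' := Int.units_mul_self (U.1 v)
        have h3 := congrArg (fun u : ℤˣ => ((u : ℤ) : ℝ)) h2'
        push_cast at h3
        simpa using h3
      constructor
      · -- norm 1
        have hinner : ⟪Uact (N+1) U a,
            Uact (N+1) U a⟫ = (1:ℝ) := by
          rw [PiLp.inner_apply]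
          simp only [RCLike.inner_apply, conj_trivial, Uact, PiLp.toLp_apply]
          have hterm : ∀ i : Fin (2*(N+1)),
              (((U.1 (U.2 i) : ℤ) : ℝ) * a (U.2 i)) * (((U.1 (U.2 i) : ℤ) : ℝ) * a (U.2 i))
              = (fun q => a q * a q) (U.2 i) := by
            intro i
            have := epsq (U.2 i)
            calc (((U.1 (U.2 i) : ℤ) : ℝ) * a (U.2 i)) * (((U.1 (U.2 i) : ℤ) : ℝ) * a (U.2 i))
                = (((U.1 (U.2 i) : ℤ) : ℝ) * ((U.1 (U.2 i) : ℤ) : ℝ)) * (a (U.2 i) * a (U.2 i)) := by ring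
              _ = a (U.2 i) * a (U.2 i) := by rw [this, one_mul]
          rw [Finset.sum_congr rfl (fun i _ => hterm i)]
          have hre := Equiv.sum_comp (Function.Involutive.toPerm U.2 hinv) (fun q => a q * a q)
          simp only [Function.Involutive.coe_toPerm] at hre
          rw [hre]
          exact hsq
        have hnn := norm_nonneg (Uact (N+1) U a)
        have hn2 : ‖Uact (N+1) U a‖^2 = 1 := by
          rw [← real_inner_self_eq_norm_sq, hinner]
        nlinarith
      · -- inner zero
        rw [PiLp.inner_apply]
        simp only [RCLike.inner_apply, conj_trivial, Uact, PiLp.toLp_apply, mul_comm (a _)]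
        set S : ℝ := ∑ i, (((U.1 (U.2 i) : ℤ) : ℝ) * a (U.2 i)) * a i with hS
        have hre := Equiv.sum_comp (Function.Involutive.toPerm U.2 hinv)
          (fun i => (((U.1 (U.2 i) : ℤ) : ℝ) * a (U.2 i)) * a i)
        simp only [Function.Involutive.coe_toPerm] at hre
        have hterm : ∀ i : Fin (2*(N+1)),
            (((U.1 (U.2 (U.2 i)) : ℤ) : ℝ) * a (U.2 (U.2 i))) * a (U.2 i)
            = -((((U.1 (U.2 i) : ℤ) : ℝ) * a (U.2 i)) * a i) := by
          intro i
          rw [hU2 i, hU1 i]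
          push_cast
          ring
        have hSS : S = -S := by
          rw [hS]
          conv_lhs => rw [← hre]
          rw [Finset.sum_congr rfl (fun i _ => hterm i), Finset.sum_neg_distrib]
        linarith
    · intro x hx
      have hxa : ∑ q, x q * a q = 0 := by
        rw [PiLp.inner_apply] at hx
        simpa [RCLike.inner_apply, mul_comm] using hx
      have hsum : ∑ U ∈ BalAux.AA N,
          ⟪x, Uact (N+1) U a⟫ •
          Uact (N+1) U a
          = ((2^N : ℝ) • x : EuclideanSpace ℝ (Fin (2*(N+1)))) := by
        rw [WithLp.ext_iff]; funext i
        rw [WithLp.ofLp_sum, Finset.sum_apply]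
        have hterm : ∀ U ∈ BalAux.AA N,
            (⟪x, Uact (N+1) U a⟫ •
            Uact (N+1) U a) i
            = ∑ jj, x jj * ((((U.1 (U.2 jj) : ℤ) : ℝ) * a (U.2 jj)) *
                (((U.1 (U.2 i) : ℤ) : ℝ) * a (U.2 i))) := by
          intro U hU
          show (⟪x, Uact (N+1) U a⟫ : ℝ) *
            (((U.1 (U.2 i) : ℤ) : ℝ) * a (U.2 i)) = _
          rw [PiLp.inner_apply]
          simp only [RCLike.inner_apply, conj_trivial, Uact, PiLp.toLp_apply]
          rw [Finset.sum_mul]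
          apply Finset.sum_congr rfl
          intro jj _
          ring
        rw [Finset.sum_congr rfl hterm, Finset.sum_comm]
        have hW : ∀ jj : Fin (2*(N+1)),
            ∑ U ∈ BalAux.AA N, x jj * ((((U.1 (U.2 jj) : ℤ) : ℝ) * a (U.2 jj)) *
              (((U.1 (U.2 i) : ℤ) : ℝ) * a (U.2 i)))
            = x jj * (2^N * ((if jj = i then (1:ℝ) else 0) - a jj * a i)) := by
          intro jj
          rw [← Finset.mul_sum, BalAux.Wval N a hsq jj i]
        rw [Finset.sum_congr rfl (fun jj _ => hW jj)]
        show _ = (2^N : ℝ) * x i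
        have e : ∀ jj : Fin (2*(N+1)),
            x jj * (2^N * ((if jj = i then (1:ℝ) else 0) - a jj * a i))
            = (2^N : ℝ) * ((if jj = i then x i else 0) - x jj * a jj * a i) := by
          intro jj
          by_cases h : jj = i
          · subst h; rw [if_pos rfl, if_pos rfl]; ring
          · rw [if_neg h, if_neg h]; ring
        rw [Finset.sum_congr rfl (fun jj _ => e jj), ← Finset.mul_sum,
          Finset.sum_sub_distrib, ← Finset.sum_mul, hxa]
        simp only [Finset.sum_ite_eq', Finset.mem_univ, if_pos]
        ring
      rw [hsum, smul_smul]
      have hone : (2*((N:ℕ)+1 : ℝ) - 1) / (((BalAux.AA N).card : ℕ) : ℝ) * (2^N : ℝ) = 1 := by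
        rw [BalAux.card_AA]
        push_cast
        rw [show 2*((N:ℝ)+1) - 1 = 2*(N:ℝ)+1 by ring]
        field_simp
      have hone' : (2*((N+1 : ℕ) : ℝ) - 1) / (((BalAux.AA N).card : ℕ) : ℝ) * (2^N : ℝ) = 1 := by
        push_cast at hone ⊢
        exact hone
      rw [hone', one_smul]
end
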